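/- arXiv:1707.07222 — 9 statements merged into one kernel-verified Lean document; each statement's English description precedes it below -/
import Mathlib

section
/- Let P be a finite poset with n elements and let x and y be two incomparable elements of P. Then for any two distinct integers p ≠ q both belonging to the possible ranks pr_P(x, y), there exists a linear extension of P in which x occurs at position p and y occurs at position q. -/
open List

/-- `e` is a linear extension of the finite poset `α`: an enumeration of all
elements such that `e i < e j` implies `i < j`. -/
def IsLinearExtension {α : Type*} [Fintype α] [PartialOrder α]
    (e : Fin (Fintype.card α) ≃ α) : Prop :=
  ∀ i j : Fin (Fintype.card α), e i < e j → i < j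

section Aux
variable {α : Type*} [PartialOrder α]

/-- The relation of a fixed linear extension of the partial order. -/
def lr (u v : α) : Prop := toLinearExtension u ≤ toLinearExtension v

instance : IsTrans α lr := ⟨fun _ _ _ h h' => le_trans h h'⟩
instance : IsAntisymm α lr :=
  ⟨fun a b h h' => (le_antisymm h h' : toLinearExtension a = toLinearExtension b)⟩
instance : IsTotal α lr := ⟨fun a b => le_total (toLinearExtension a) (toLinearExtension b)⟩
instance : Std.Antisymm (@lr α _) :=
  ⟨fun a b h h' => (le_antisymm h h' : toLinearExtension a = toLinearExtension b)⟩
instance : Std.Total (@lr α _) := ⟨fun a b => le_total (toLinearExtension a) (toLinearExtension b)⟩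

lemma lr_key {u v : α} (h : lr u v) (hne : u ≠ v) : ¬ v < u := fun hlt =>
  hne (le_antisymm h (toLinearExtension.monotone hlt.le) : toLinearExtension u = toLinearExtension v)

end Aux

private lemma main {α : Type*} [Fintype α] [PartialOrder α]
    (x y : α) (hxy : x ≠ y) (h1 : ¬ x < y) (h2 : ¬ y < x)
    (p q : ℕ) (hpq : p < q)
    (hp1 : {z : α | z ≠ x ∧ z ≠ y ∧ (z < x ∨ z < y)}.ncard + 1 ≤ p)
    (hq2 : q ≤ Fintype.card α - {z : α | z ≠ x ∧ z ≠ y ∧ (x < z ∨ y < z)}.ncard) :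
    ∃ e : Fin (Fintype.card α) ≃ α, IsLinearExtension e ∧
      ((e.symm x : ℕ) + 1 = p) ∧ ((e.symm y : ℕ) + 1 = q) := by
  classical
  set PA : α → Prop := fun z => z ≠ x ∧ z ≠ y ∧ (z < x ∨ z < y) with hPA
  set PU : α → Prop := fun z => z ≠ x ∧ z ≠ y ∧ (x < z ∨ y < z) with hPU
  set PM : α → Prop := fun z => z ≠ x ∧ z ≠ y ∧ ¬ (z < x ∨ z < y) ∧ ¬ (x < z ∨ y < z) with hPM
  letI : DecidableRel (@lr α _) := fun _ _ => Classical.dec _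
  set A : Finset α := Finset.univ.filter PA with hA
  set U : Finset α := Finset.univ.filter PU with hU
  set M : Finset α := Finset.univ.filter PM with hM
  have hcardA : {z : α | PA z}.ncard = A.card := by
    rw [hA]; rw [← Set.ncard_coe_finset]; congr 1; ext z; simp
  have hcardU : {z : α | PU z}.ncard = U.card := by
    rw [hU]; rw [← Set.ncard_coe_finset]; congr 1; ext z; simp
  rw [hcardA] at hp1
  rw [hcardU] at hq2
  set lA : List α := A.sort lr with hlA
  set lM : List α := M.sort lr with hlM
  set lU : List α := U.sort lr with hlU
  set k₁ : ℕ := p - 1 - A.card with hk₁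
  set k₂ : ℕ := q - p - 1 with hk₂
  set lM1 : List α := lM.take k₁ with hlM1
  set lM2 : List α := (lM.drop k₁).take k₂ with hlM2
  set lM3 : List α := (lM.drop k₁).drop k₂ with hlM3
  have hsplit : lM = lM1 ++ (lM2 ++ lM3) := by
    rw [hlM1, hlM2, hlM3, take_append_drop, take_append_drop]
  -- membership facts
  have memA : ∀ z ∈ lA, PA z := fun z hz => (Finset.mem_filter.1 ((Finset.mem_sort lr).1 hz)).2
  have memU : ∀ z ∈ lU, PU z := fun z hz => (Finset.mem_filter.1 ((Finset.mem_sort lr).1 hz)).2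
  have memM : ∀ z ∈ lM, PM z := fun z hz => (Finset.mem_filter.1 ((Finset.mem_sort lr).1 hz)).2
  have memM1 : ∀ z ∈ lM1, PM z := fun z hz => memM z ((take_sublist _ _).subset hz)
  have memM2 : ∀ z ∈ lM2, PM z := fun z hz =>
    memM z ((drop_sublist _ _).subset (((take_sublist _ _).subset hz)))
  have memM3 : ∀ z ∈ lM3, PM z := fun z hz =>
    memM z ((drop_sublist _ _).subset (((drop_sublist _ _).subset hz)))
  set S : α → α → Prop := fun u v => u ≠ v ∧ ¬ v < u with hS
  have hsortS : ∀ s : Finset α, (s.sort lr).Pairwise S := by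
    intro s
    have := ((s.pairwise_sort lr).and (s.sort_nodup lr)) 
    exact this.imp (fun ⟨hr, hne⟩ => ⟨hne, lr_key hr hne⟩)
  -- poset cross facts
  have FAx : ∀ u, PA u → S u x := by
    rintro u ⟨hux, huy, hlt⟩
    refine ⟨hux, fun hxu => ?_⟩
    rcases hlt with h | h
    · exact absurd (hxu.trans h) (lt_irrefl x)
    · exact h1 (hxu.trans h)
  have FAy : ∀ u, PA u → S u y := by
    rintro u ⟨hux, huy, hlt⟩
    refine ⟨huy, fun hyu => ?_⟩
    rcases hlt with h | h
    · exact h2 (hyu.trans h)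
    · exact absurd (hyu.trans h) (lt_irrefl y)
  have FAM : ∀ u, PA u → ∀ v, PM v → S u v := by
    rintro u ⟨hux, huy, hlt⟩ v ⟨hvx, hvy, hnlt, hngt⟩
    constructor
    · rintro rfl; exact hnlt hlt
    · intro hvu
      exact hnlt (hlt.imp (fun h => hvu.trans h) (fun h => hvu.trans h))
  have FAU : ∀ u, PA u → ∀ v, PU v → S u v := by
    rintro u ⟨hux, huy, hlt⟩ v ⟨hvx, hvy, hgt⟩
    constructor
    · rintro rfl
      rcases hlt with h | h <;> rcases hgt with h' | h'
      · exact absurd (h'.trans h) (lt_irrefl x)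
      · exact h2 (h'.trans h)
      · exact h1 (h'.trans h)
      · exact absurd (h'.trans h) (lt_irrefl y)
    · intro hvu
      rcases hlt with h | h <;> rcases hgt with h' | h'
      · exact absurd (h'.trans (hvu.trans h)) (lt_irrefl x)
      · exact h2 (h'.trans (hvu.trans h))
      · exact h1 (h'.trans (hvu.trans h))
      · exact absurd (h'.trans (hvu.trans h)) (lt_irrefl y)
  have FxM : ∀ v, PM v → S x v := by
    rintro v ⟨hvx, hvy, hnlt, hngt⟩
    exact ⟨fun h => hvx h.symm, fun hvu => hnlt (Or.inl hvu)⟩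
  have FyM : ∀ v, PM v → S y v := by
    rintro v ⟨hvx, hvy, hnlt, hngt⟩
    exact ⟨fun h => hvy h.symm, fun hvu => hnlt (Or.inr hvu)⟩
  have FMx : ∀ u, PM u → S u x := by
    rintro u ⟨hux, huy, hnlt, hngt⟩
    exact ⟨hux, fun hxu => hngt (Or.inl hxu)⟩
  have FMy : ∀ u, PM u → S u y := by
    rintro u ⟨hux, huy, hnlt, hngt⟩
    exact ⟨huy, fun hyu => hngt (Or.inr hyu)⟩
  have FxU : ∀ v, PU v → S x v := by
    rintro v ⟨hvx, hvy, hgt⟩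
    refine ⟨fun h => hvx h.symm, fun hvx' => ?_⟩
    rcases hgt with h | h
    · exact absurd (h.trans hvx') (lt_irrefl x)
    · exact h2 (h.trans hvx')
  have FyU : ∀ v, PU v → S y v := by
    rintro v ⟨hvx, hvy, hgt⟩
    refine ⟨fun h => hvy h.symm, fun hvy' => ?_⟩
    rcases hgt with h | h
    · exact h1 (h.trans hvy')
    · exact absurd (h.trans hvy') (lt_irrefl y)
  have FMU : ∀ u, PM u → ∀ v, PU v → S u v := by
    rintro u ⟨hux, huy, hnlt, hngt⟩ v ⟨hvx, hvy, hgt⟩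
    constructor
    · rintro rfl; exact hngt hgt
    · intro hvu
      exact hngt (hgt.imp (fun h => h.trans hvu) (fun h => h.trans hvu))
  -- pairwise of M under split
  have hSM : (lM1 ++ (lM2 ++ lM3)).Pairwise S := hsplit ▸ hsortS M
  rw [List.pairwise_append] at hSM
  obtain ⟨hSM1, hSM23, hM1x23⟩ := hSM
  rw [List.pairwise_append] at hSM23
  obtain ⟨hSM2, hSM3, hM2x3⟩ := hSM23
  -- building the big list
  set l : List α := lA ++ (lM1 ++ (x :: (lM2 ++ (y :: (lM3 ++ lU))))) with hl
  have hPl : l.Pairwise S := by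
    rw [hl]
    have t1 : (lM3 ++ lU).Pairwise S :=
      List.pairwise_append.2 ⟨hSM3, hsortS U, fun u hu v hv => FMU u (memM3 u hu) v (memU v hv)⟩
    have t2 : (y :: (lM3 ++ lU)).Pairwise S := by
      rw [List.pairwise_cons]
      refine ⟨fun v hv => ?_, t1⟩
      rcases List.mem_append.1 hv with hv | hv
      · exact FyM v (memM3 v hv)
      · exact FyU v (memU v hv)
    have t3 : (lM2 ++ (y :: (lM3 ++ lU))).Pairwise S := by
      refine List.pairwise_append.2 ⟨hSM2, t2, fun u hu v hv => ?_⟩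
      rcases List.mem_cons.1 hv with rfl | hv
      · exact FMy u (memM2 u hu)
      · rcases List.mem_append.1 hv with hv | hv
        · exact hM2x3 u hu v hv
        · exact FMU u (memM2 u hu) v (memU v hv)
    have t4 : (x :: (lM2 ++ (y :: (lM3 ++ lU)))).Pairwise S := by
      rw [List.pairwise_cons]
      refine ⟨fun v hv => ?_, t3⟩
      rcases List.mem_append.1 hv with hv | hv
      · exact FxM v (memM2 v hv)
      · rcases List.mem_cons.1 hv with rfl | hv
        · exact ⟨hxy, h2⟩
        · rcases List.mem_append.1 hv with hv | hv
          · exact FxM v (memM3 v hv)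
          · exact FxU v (memU v hv)
    have t5 : (lM1 ++ (x :: (lM2 ++ (y :: (lM3 ++ lU))))).Pairwise S := by
      refine List.pairwise_append.2 ⟨hSM1, t4, fun u hu v hv => ?_⟩
      rcases List.mem_cons.1 hv with rfl | hv
      · exact FMx u (memM1 u hu)
      · rcases List.mem_append.1 hv with hv | hv
        · exact hM1x23 u hu v (List.mem_append.2 (Or.inl hv))
        · rcases List.mem_cons.1 hv with rfl | hv
          · exact FMy u (memM1 u hu)
          · rcases List.mem_append.1 hv with hv | hv
            · exact hM1x23 u hu v (List.mem_append.2 (Or.inr hv))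
            · exact FMU u (memM1 u hu) v (memU v hv)
    refine List.pairwise_append.2 ⟨hsortS A, t5, fun u hu v hv => ?_⟩
    have hAu := memA u hu
    rcases List.mem_append.1 hv with hv | hv
    · exact FAM u hAu v (memM1 v hv)
    · rcases List.mem_cons.1 hv with rfl | hv
      · exact FAx u hAu
      · rcases List.mem_append.1 hv with hv | hv
        · exact FAM u hAu v (memM2 v hv)
        · rcases List.mem_cons.1 hv with rfl | hv
          · exact FAy u hAu
          · rcases List.mem_append.1 hv with hv | hv
            · exact FAM u hAu v (memM3 v hv)
            · exact FAU u hAu v (memU v hv)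
  have hnd : l.Nodup := hPl.imp (fun h => h.1)
  have hR : l.Pairwise (fun u v => ¬ v < u) := hPl.imp (fun h => h.2)
  have hmem : ∀ z : α, z ∈ l := by
    intro z
    rw [hl]
    simp only [List.mem_append, List.mem_cons]
    by_cases hzx : z = x
    · tauto
    by_cases hzy : z = y
    · tauto
    by_cases hlt : z < x ∨ z < y
    · exact Or.inl ((Finset.mem_sort lr).2 (Finset.mem_filter.2 ⟨Finset.mem_univ _, hzx, hzy, hlt⟩))
    by_cases hgt : x < z ∨ y < z
    · have : z ∈ lU := (Finset.mem_sort lr).2 (Finset.mem_filter.2 ⟨Finset.mem_univ _, hzx, hzy, hgt⟩)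
      tauto
    · have : z ∈ lM := (Finset.mem_sort lr).2
        (Finset.mem_filter.2 ⟨Finset.mem_univ _, hzx, hzy, hlt, hgt⟩)
      rw [hsplit] at this
      simp only [List.mem_append] at this
      tauto
  have hlen : l.length = Fintype.card α := by
    have : l.toFinset = Finset.univ := Finset.eq_univ_of_forall (fun z => List.mem_toFinset.2 (hmem z))
    rw [← List.toFinset_card_of_nodup hnd, this, Finset.card_univ]
  -- length bookkeeping
  have hlenM : lM.length = M.card := Finset.length_sort lr
  have hlenA : lA.length = A.card := Finset.length_sort lr
  have hlenU : lU.length = U.card := Finset.length_sort lr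
  have hlensplit : lM1.length + (lM2.length + lM3.length) = M.card := by
    rw [← hlenM, hsplit]; simp
  have hlenl : l.length = A.card + (lM1.length + (1 + (lM2.length + (1 + (lM3.length + U.card))))) := by
    rw [hl]; simp [hlenA, hlenU]; omega
  have hcards : A.card + M.card + U.card + 2 = Fintype.card α := by omega
  have hk1le : k₁ ≤ lM.length := by omega
  have hk12le : k₁ + k₂ ≤ lM.length := by omega
  have hlen1 : lM1.length = k₁ := by rw [hlM1, List.length_take]; omega
  have hlen2 : lM2.length = k₂ := by rw [hlM2, List.length_take, List.length_drop]; omega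
  -- the equivalence
  set E : Fin l.length ≃ α := hnd.getEquivOfForallMemList l hmem with hE
  have hEval : ∀ i : Fin l.length, E i = l.get i := fun i => rfl
  have hEsym : ∀ z : α, ((E.symm z : Fin l.length) : ℕ) = List.idxOf z l := fun z => rfl
  set e : Fin (Fintype.card α) ≃ α := (finCongr hlen.symm).trans E with he
  have hesym : ∀ z : α, ((e.symm z : Fin (Fintype.card α)) : ℕ) = List.idxOf z l := by
    intro z
    simp only [he, Equiv.symm_trans_apply, finCongr_symm, finCongr_apply, Fin.coe_cast]
    exact hEsym z
  have hidx_x : List.idxOf x l = A.card + k₁ := by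
    have hxnA : x ∉ lA := fun h => (memA x h).1 rfl
    have hxnM1 : x ∉ lM1 := fun h => (memM1 x h).1 rfl
    rw [hl, List.idxOf_append_of_notMem hxnA, List.idxOf_append_of_notMem hxnM1,
      List.idxOf_cons_self, hlenA, hlen1]
    omega
  have hidx_y : List.idxOf y l = A.card + k₁ + 1 + k₂ := by
    have hynA : y ∉ lA := fun h => (memA y h).2.1 rfl
    have hynM1 : y ∉ lM1 := fun h => (memM1 y h).2.1 rfl
    have hynM2 : y ∉ lM2 := fun h => (memM2 y h).2.1 rfl
    rw [hl, List.idxOf_append_of_notMem hynA, List.idxOf_append_of_notMem hynM1,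
      List.idxOf_cons_ne _ hxy, List.idxOf_append_of_notMem hynM2,
      List.idxOf_cons_self, hlenA, hlen1, hlen2]
    omega
  refine ⟨e, ?_, ?_, ?_⟩
  · intro i j hij
    rcases lt_trichotomy ((j : ℕ)) ((i : ℕ)) with h | h | h
    · exfalso
      have hpg := (List.pairwise_iff_get.1 hR) (Fin.cast hlen.symm j) (Fin.cast hlen.symm i) h
      have hij' : l.get (Fin.cast hlen.symm i) < l.get (Fin.cast hlen.symm j) := by
        have e1 : e i = l.get (Fin.cast hlen.symm i) := rfl
        have e2 : e j = l.get (Fin.cast hlen.symm j) := rfl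
        rw [e1, e2] at hij
        exact hij
      exact hpg hij'
    · exfalso
      have : i = j := Fin.ext h.symm
      subst this
      exact lt_irrefl _ hij
    · exact h
  · rw [hesym x, hidx_x]; omega
  · rw [hesym y, hidx_y]; omega

/-- for incomparable `x ≠ y` and distinct positions `p ≠ q` in the
possible ranks `pr_P(x, y) = [a+1, n-d]`, there is a linear extension putting
`x` at position `p` and `y` at position `q` (positions are 1-indexed). -/
theorem stmt0 {α : Type*} [Fintype α] [PartialOrder α]
    (x y : α) (hxy : x ≠ y) (hinc : ¬ x < y ∧ ¬ y < x)
    (p q : ℕ) (hpq : p ≠ q)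
    (hp : {z : α | z ≠ x ∧ z ≠ y ∧ (z < x ∨ z < y)}.ncard + 1 ≤ p ∧
          p ≤ Fintype.card α - {z : α | z ≠ x ∧ z ≠ y ∧ (x < z ∨ y < z)}.ncard)
    (hq : {z : α | z ≠ x ∧ z ≠ y ∧ (z < x ∨ z < y)}.ncard + 1 ≤ q ∧
          q ≤ Fintype.card α - {z : α | z ≠ x ∧ z ≠ y ∧ (x < z ∨ y < z)}.ncard) :
    ∃ e : Fin (Fintype.card α) ≃ α, IsLinearExtension e ∧
      ((e.symm x : ℕ) + 1 = p) ∧ ((e.symm y : ℕ) + 1 = q) := by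
  have hsetA : {z : α | z ≠ y ∧ z ≠ x ∧ (z < y ∨ z < x)}
      = {z : α | z ≠ x ∧ z ≠ y ∧ (z < x ∨ z < y)} := Set.ext fun z =>
    ⟨fun ⟨a, b, c⟩ => ⟨b, a, c.symm⟩, fun ⟨a, b, c⟩ => ⟨b, a, c.symm⟩⟩
  have hsetU : {z : α | z ≠ y ∧ z ≠ x ∧ (y < z ∨ x < z)}
      = {z : α | z ≠ x ∧ z ≠ y ∧ (x < z ∨ y < z)} := Set.ext fun z =>
    ⟨fun ⟨a, b, c⟩ => ⟨b, a, c.symm⟩, fun ⟨a, b, c⟩ => ⟨b, a, c.symm⟩⟩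
  rcases lt_or_gt_of_ne hpq with h | h
  · exact main x y hxy hinc.1 hinc.2 p q h hp.1 hq.2
  · obtain ⟨e, he1, he2, he3⟩ := main y x hxy.symm hinc.2 hinc.1 q p h
      (by rw [hsetA]; exact hq.1) (by rw [hsetU]; exact hp.2)
    exact ⟨e, he1, he3, he2⟩
end

section
/- Let P be a finite poset with n elements, let x be an element of P, and let 1 ≤ p ≤ n. There exists a linear extension of P in which x occurs at position p if and only if a < p and p ≤ n − d, where a is the number of elements strictly below x in P and d is the number of elements strictly above x in P. -/
open Finset

/-- lex-style inequality for base-B digits -/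
private lemma lexB_lt {B a a' r r' : ℕ} (hr : r < B) (h : a < a') :
    a * B + r < a' * B + r' :=
  calc a * B + r < a * B + B := by omega
    _ = (a + 1) * B := by ring
    _ ≤ a' * B := Nat.mul_le_mul_right B h
    _ ≤ a' * B + r' := Nat.le_add_right _ _

private lemma card_fin_filter_lt (n m : ℕ) (h : m ≤ n) :
    (Finset.univ.filter fun i : Fin n => (i : ℕ) < m).card = m := by
  classical
  rw [← Finset.card_map ⟨Fin.val, Fin.val_injective⟩]
  have : (Finset.univ.filter fun i : Fin n => (i : ℕ) < m).map
      ⟨Fin.val, Fin.val_injective⟩ = Finset.range m := by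
    ext v
    simp only [Finset.mem_map, Finset.mem_filter, Finset.mem_univ, true_and,
      Function.Embedding.coeFn_mk, Finset.mem_range]
    constructor
    · rintro ⟨i, hi, rfl⟩; exact hi
    · intro hv; exact ⟨⟨v, lt_of_lt_of_le hv h⟩, hv, rfl⟩
  rw [this, Finset.card_range]

/-- An injective `f : α → ℕ` yields an enumeration realizing the order given by `f`. -/
private lemma exists_good_equiv {α : Type*} [Fintype α] (f : α → ℕ)
    (hf : Function.Injective f) :
    ∃ e : Fin (Fintype.card α) ≃ α,
      ∀ i j : Fin (Fintype.card α), i < j ↔ f (e i) < f (e j) := by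
  classical
  set s : Finset ℕ := Finset.image f Finset.univ with hsdef
  have hcard : s.card = Fintype.card α := by
    rw [hsdef, Finset.card_image_of_injective _ hf, Finset.card_univ]
  set iso := s.orderIsoOfFin hcard with hiso
  have hmem : ∀ a : α, f a ∈ s := fun a => Finset.mem_image_of_mem f (Finset.mem_univ a)
  have hbij : Function.Bijective (fun a : α => (⟨f a, hmem a⟩ : ↥s)) := by
    constructor
    · intro a b h
      exact hf (congrArg Subtype.val h)
    · rintro ⟨y, hy⟩
      rcases Finset.mem_image.mp hy with ⟨a, -, rfl⟩
      exact ⟨a, rfl⟩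
  set G : α ≃ ↥s := Equiv.ofBijective _ hbij with hG
  refine ⟨iso.toEquiv.trans G.symm, fun i j => ?_⟩
  have h1 : ∀ i : Fin (Fintype.card α), f ((iso.toEquiv.trans G.symm) i) = (iso i : ℕ) := by
    intro i
    have h2 : G (G.symm (iso i)) = iso i := G.apply_symm_apply _
    have h3 := congrArg Subtype.val h2
    simpa [hG, Equiv.ofBijective] using h3
  rw [h1 i, h1 j]
  exact iso.lt_iff_lt.symm.trans Subtype.coe_lt_coe.symm

/-- position of `x` in the enumeration counts elements with smaller `f`-value. -/
private lemma symm_count {α : Type*} [Fintype α] (f : α → ℕ)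
    (e : Fin (Fintype.card α) ≃ α)
    (he : ∀ i j, i < j ↔ f (e i) < f (e j)) (x : α) :
    (e.symm x : ℕ) = (Finset.univ.filter fun z => f z < f x).card := by
  classical
  have key : (Finset.univ.filter fun z => f z < f x)
      = Finset.image e (Finset.univ.filter fun i => i < e.symm x) := by
    ext z
    simp only [Finset.mem_filter, Finset.mem_univ, true_and, Finset.mem_image]
    constructor
    · intro hz
      refine ⟨e.symm z, ?_, e.apply_symm_apply z⟩
      rw [he]
      simp only [Equiv.apply_symm_apply]
      exact hz
    · rintro ⟨i, hi, rfl⟩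
      have h2 := (he i (e.symm x)).mp hi
      rwa [Equiv.apply_symm_apply] at h2
  rw [key, Finset.card_image_of_injective _ e.injective]
  have heq : (Finset.univ.filter fun i : Fin (Fintype.card α) => i < e.symm x)
      = (Finset.univ.filter fun i : Fin (Fintype.card α) => (i : ℕ) < (e.symm x : ℕ)) :=
    Finset.filter_congr fun i _ => Fin.lt_def
  rw [heq, card_fin_filter_lt _ _ (le_of_lt (e.symm x).isLt)]

/-- `x` occurs at (1-indexed) position `p` in some linear extension
iff `a < p` and `p ≤ n - d`, where `a` is the number of elements strictly below
`x` and `d` the number of elements strictly above `x`. -/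
theorem stmt1 {α : Type*} [Fintype α] [PartialOrder α]
    (x : α) (p : ℕ) (hp : 1 ≤ p ∧ p ≤ Fintype.card α) :
    (∃ e : Fin (Fintype.card α) ≃ α, IsLinearExtension e ∧ (e.symm x : ℕ) + 1 = p)
    ↔ ({z : α | z < x}.ncard < p ∧
        p ≤ Fintype.card α - {z : α | x < z}.ncard) := by
  classical
  set n := Fintype.card α with hn
  have hA : {z : α | z < x}.ncard = (Finset.univ.filter fun z : α => z < x).card := by
    have hAs : {z : α | z < x} = ↑(Finset.univ.filter fun z : α => z < x) := by
      ext z; simp only [Set.mem_setOf_eq, Finset.coe_filter, Finset.mem_univ, true_and]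
    rw [hAs, Set.ncard_coe_finset]
  have hD : {z : α | x < z}.ncard = (Finset.univ.filter fun z : α => x < z).card := by
    have hDs : {z : α | x < z} = ↑(Finset.univ.filter fun z : α => x < z) := by
      ext z; simp only [Set.mem_setOf_eq, Finset.coe_filter, Finset.mem_univ, true_and]
    rw [hDs, Set.ncard_coe_finset]
  set aF := (Finset.univ.filter fun z : α => z < x).card with haF
  set dF := (Finset.univ.filter fun z : α => x < z).card with hdF
  rw [hA, hD]
  constructor
  · rintro ⟨e, hle, hpos⟩
    set m : Fin n := e.symm x with hm
    have hmp : (m : ℕ) + 1 = p := hpos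
    constructor
    · -- aF ≤ m < p
      have : aF ≤ (m : ℕ) := by
        have hle2 : aF ≤ (Finset.univ.filter fun i : Fin n => (i : ℕ) < (m : ℕ)).card := by
          apply Finset.card_le_card_of_injOn (fun z => e.symm z)
          · intro z hz
            simp only [Finset.mem_coe, Finset.mem_filter, Finset.mem_univ, true_and] at hz ⊢
            have h3 : e (e.symm z) < e (e.symm x) := by
              rw [Equiv.apply_symm_apply, Equiv.apply_symm_apply]; exact hz
            exact hle _ _ h3
          · exact fun u _ v _ h => e.symm.injective h
        rwa [card_fin_filter_lt _ _ (le_of_lt m.isLt)] at hle2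
      omega
    · -- dF ≤ n - p, hence p ≤ n - dF
      have hd : dF ≤ n - p := by
        have hcomp : (Finset.univ.filter fun i : Fin n => (m : ℕ) < (i : ℕ))
            = Finset.univ \ (Finset.univ.filter fun i : Fin n => (i : ℕ) < (m : ℕ) + 1) := by
          ext i
          simp only [Finset.mem_filter, Finset.mem_univ, true_and, Finset.mem_sdiff]
          omega
        have hmlt : (m : ℕ) + 1 ≤ n := m.isLt
        have hcard2 : (Finset.univ.filter fun i : Fin n => (m : ℕ) < (i : ℕ)).card
            = n - p := by
          rw [hcomp, Finset.card_sdiff_of_subset (Finset.filter_subset _ _), Finset.card_univ,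
            card_fin_filter_lt _ _ hmlt, Fintype.card_fin]
          omega
        have hle2 : dF ≤ (Finset.univ.filter fun i : Fin n => (m : ℕ) < (i : ℕ)).card := by
          apply Finset.card_le_card_of_injOn (fun z => e.symm z)
          · intro z hz
            simp only [Finset.mem_coe, Finset.mem_filter, Finset.mem_univ, true_and] at hz ⊢
            have h3 : e (e.symm x) < e (e.symm z) := by
              rw [Equiv.apply_symm_apply, Equiv.apply_symm_apply]; exact hz
            exact hle _ _ h3
          · exact fun u _ v _ h => e.symm.injective h
        omega
      have hpn : p ≤ n := hp.2
      omega
  · rintro ⟨ha, hd⟩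
    -- construction
    set B : ℕ := n + 1 with hB
    set ι : α → ℕ := fun z => (Fintype.equivFin α z : ℕ) with hι
    have hιlt : ∀ z, ι z < B := fun z => by
      have := ((Fintype.equivFin α) z).isLt
      simp only [hι, hB]; omega
    have hιinj : Function.Injective ι :=
      fun a b h => (Fintype.equivFin α).injective (Fin.val_injective h)
    set f0 : α → ℕ := fun z => (Finset.univ.filter fun w : α => w ≤ z).card with hf0
    have hf0lt : ∀ z, f0 z < B := fun z => by
      have : (Finset.univ.filter fun w : α => w ≤ z).card ≤ n := by
        rw [hn, ← Finset.card_univ]; exact Finset.card_le_card (Finset.filter_subset _ _)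
      simp only [hf0, hB]; omega
    have hf0mono : ∀ {v w : α}, v < w → f0 v < f0 w := by
      intro v w hvw
      apply Finset.card_lt_card
      constructor
      · intro u hu
        simp only [Finset.mem_filter, Finset.mem_univ, true_and] at hu ⊢
        exact hu.trans hvw.le
      · intro hsub
        have := hsub (by simp : w ∈ Finset.univ.filter fun u : α => u ≤ w)
        simp only [Finset.mem_filter, Finset.mem_univ, true_and] at this
        exact absurd (lt_of_lt_of_le hvw this) (lt_irrefl v)
    set k : α → ℕ := fun z => if z ≤ x then 0 else if x < z then 2 else 1 with hk
    have hklow : ∀ {v : α}, ¬ x < v → k v ≤ 1 := by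
      intro v hv
      by_cases hvx : v ≤ x
      · simp [hk, hvx]
      · simp [hk, hvx, hv]
    have hkhigh : ∀ {v : α}, x < v → k v = 2 := by
      intro v hv
      simp only [hk]
      rw [if_neg, if_pos hv]
      intro hvx
      exact absurd (hv.trans_le hvx) (lt_irrefl x)
    have hkmono : ∀ {v w : α}, v < w → k v ≤ k w := by
      intro v w hvw
      by_cases hw0 : w ≤ x
      · have hv0 : v ≤ x := hvw.le.trans hw0
        simp [hk, hv0, hw0]
      · by_cases hv2 : x < v
        · have h2 := hkhigh (hv2.trans hvw)
          have h2' := hkhigh hv2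
          omega
        · have h1 := hklow hv2
          have h2 : 1 ≤ k w := by
            by_cases hw2 : x < w
            · have := hkhigh hw2; omega
            · simp [hk, hw0, hw2]
          omega
    set f1 : α → ℕ := fun z => (k z * B + f0 z) * B + ι z with hf1
    have hf1mono : ∀ {v w : α}, v < w → f1 v < f1 w := by
      intro v w hvw
      have hk' := hkmono hvw
      have hf0' := hf0mono hvw
      have hinner : k v * B + f0 v < k w * B + f0 w := by
        rcases lt_or_eq_of_le hk' with h | h
        · exact lexB_lt (hf0lt v) h
        · rw [h]; exact Nat.add_lt_add_left hf0' _
      exact lexB_lt (hιlt v) hinner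
    have hf1inj : Function.Injective f1 := by
      intro v w h
      apply hιinj
      have hv := hιlt v
      have hw := hιlt w
      simp only [hf1] at h
      have e1 : ι v % B = ((k v * B + f0 v) * B + ι v) % B := by
        rw [Nat.add_comm, Nat.add_mul_mod_self_right]
      have e2 : ι w % B = ((k w * B + f0 w) * B + ι w) % B := by
        rw [Nat.add_comm, Nat.add_mul_mod_self_right]
      have h2 : ι v % B = ι w % B := by rw [e1, e2, h]
      rwa [Nat.mod_eq_of_lt hv, Nat.mod_eq_of_lt hw] at h2
    obtain ⟨e1, he1⟩ := exists_good_equiv f1 hf1inj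
    set r : α → ℕ := fun z => (e1.symm z : ℕ) with hr
    have hrval : ∀ z, r z = (Finset.univ.filter fun w => f1 w < f1 z).card :=
      fun z => symm_count f1 e1 he1 z
    have hrmono : ∀ {v w : α}, v < w → r v < r w := by
      intro v w hvw
      have h1 : f1 (e1 (e1.symm v)) < f1 (e1 (e1.symm w)) := by
        rw [Equiv.apply_symm_apply, Equiv.apply_symm_apply]
        exact hf1mono hvw
      exact (he1 _ _).mpr h1
    have hrinj : Function.Injective r := by
      intro v w h
      have : e1.symm v = e1.symm w := Fin.val_injective h
      simpa using congrArg e1 this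
    -- elements not above x have smaller f1 than elements above x
    have hblock : ∀ {w z : α}, ¬ x < w → x < z → f1 w < f1 z := by
      intro w z hw hz
      have hkw : k w ≤ 1 := hklow hw
      have hkz : k z = 2 := hkhigh hz
      have hinner : k w * B + f0 w < k z * B + f0 z :=
        lexB_lt (hf0lt w) (by omega)
      exact lexB_lt (hιlt w) hinner
    -- r x = aF
    have hrx : r x = aF := by
      rw [hrval x, haF]
      congr 1
      apply Finset.filter_congr
      intro z _
      constructor
      · intro h
        by_cases hzx : z = x
        · exact absurd h (by rw [hzx]; exact lt_irrefl _)
        by_cases hle : z ≤ x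
        · exact lt_of_le_of_ne hle hzx
        · have hkx : k x = 0 := by simp [hk]
          have hkz : 1 ≤ k z := by
            by_cases h2 : x < z
            · have := hkhigh h2; omega
            · simp [hk, hle, h2]
          have hcontra : f1 x < f1 z :=
            lexB_lt (hιlt x) (lexB_lt (hf0lt x) (by omega))
          omega
      · intro h; exact hf1mono h
    -- r z ≥ n - dF whenever x < z
    have hrtop : ∀ {z : α}, x < z → n - dF ≤ r z := by
      intro z hz
      rw [hrval z]
      have hsub : (Finset.univ.filter fun w : α => ¬ x < w) ⊆
          Finset.univ.filter fun w => f1 w < f1 z := by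
        intro w hw
        simp only [Finset.mem_filter, Finset.mem_univ, true_and] at hw ⊢
        exact hblock hw hz
      have hcardnot : (Finset.univ.filter fun w : α => ¬ x < w).card = n - dF := by
        rw [Finset.filter_not, Finset.card_sdiff_of_subset (Finset.filter_subset _ _),
          Finset.card_univ, ← hn, ← hdF]
      calc n - dF = _ := hcardnot.symm
        _ ≤ _ := Finset.card_le_card hsub
    -- the final valuation
    set f : α → ℕ := fun z => if z = x then 2 * (p - 1) + 1 else 2 * r z with hf
    have hfx : f x = 2 * (p - 1) + 1 := by simp [hf]
    have hfinj : Function.Injective f := by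
      intro v w h
      simp only [hf] at h
      split_ifs at h with h1 h2 h2
      · rw [h1, h2]
      · omega
      · omega
      · exact hrinj (by omega)
    have hp1 : 1 ≤ p := hp.1
    have hfmono : ∀ {v w : α}, v < w → f v < f w := by
      intro v w hvw
      by_cases h1 : v = x
      · have hxw : x < w := by rw [← h1]; exact hvw
        have hw : w ≠ x := fun h => absurd (h ▸ hxw) (lt_irrefl x)
        have h3 := hrtop hxw
        have hfv : f v = 2 * (p - 1) + 1 := by rw [h1]; exact hfx
        have hfw : f w = 2 * r w := by simp only [hf, if_neg hw]
        rw [hfv, hfw]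
        omega
      · by_cases h2 : w = x
        · have hvx : v < x := by rw [← h2]; exact hvw
          have h3 := hrmono hvx
          rw [hrx] at h3
          have hfv : f v = 2 * r v := by simp only [hf, if_neg h1]
          have hfw : f w = 2 * (p - 1) + 1 := by rw [h2]; exact hfx
          rw [hfv, hfw]
          omega
        · have h3 := hrmono hvw
          have hfv : f v = 2 * r v := by simp only [hf, if_neg h1]
          have hfw : f w = 2 * r w := by simp only [hf, if_neg h2]
          rw [hfv, hfw]
          omega
    obtain ⟨e, he⟩ := exists_good_equiv f hfinj
    refine ⟨e, ?_, ?_⟩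
    · intro i j hij
      exact (he i j).mpr (hfmono hij)
    · rw [symm_count f e he x]
      -- the filter has cardinality p - 1
      have hset : (Finset.univ.filter fun z => f z < f x)
          = (Finset.univ.filter fun z : α => r z < p).erase x := by
        ext z
        simp only [Finset.mem_filter, Finset.mem_univ, true_and, Finset.mem_erase]
        constructor
        · intro h
          have hzx : z ≠ x := by
            intro hzx; rw [hzx] at h; exact lt_irrefl _ h
          refine ⟨hzx, ?_⟩
          have hfz : f z = 2 * r z := by simp only [hf, if_neg hzx]
          rw [hfz, hfx] at h
          omega
        · rintro ⟨hzx, hz⟩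
          have hfz : f z = 2 * r z := by simp only [hf, if_neg hzx]
          rw [hfz, hfx]
          omega
      have hcardr : (Finset.univ.filter fun z : α => r z < p).card = p := by
        have himg : (Finset.univ.filter fun z : α => r z < p)
            = Finset.image e1 (Finset.univ.filter fun i : Fin n => (i : ℕ) < p) := by
          ext z
          simp only [Finset.mem_filter, Finset.mem_univ, true_and, Finset.mem_image]
          constructor
          · intro h
            exact ⟨e1.symm z, h, by simp⟩
          · rintro ⟨i, hi, rfl⟩
            simpa [hr] using hi
        rw [himg, Finset.card_image_of_injective _ e1.injective,
          card_fin_filter_lt _ _ hp.2]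
      have hxmem : x ∈ Finset.univ.filter fun z : α => r z < p := by
        simp only [Finset.mem_filter, Finset.mem_univ, true_and, hrx]
        omega
      rw [hset, Finset.card_erase_of_mem hxmem, hcardr]
      omega
end

section
/- Let (P, T) be a labeled finite poset with n elements, let 1 ≤ k ≤ n, and let t be a label. Then every linear extension of P has an element labeled t at position k if and only if every element x of P satisfying a_x < k ≤ n − d_x has T(x) = t, where a_x is the number of elements strictly below x and d_x is the number of elements strictly above x. -/
/-- In a list sorted (pairwise) w.r.t. an antisymmetric relation `r`, if `z ∈ l`,
`s` is among the first `m` entries, `r z s` and `z ≠ s`, then `z` is also among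
the first `m` entries. -/
lemma mem_take_of_rel_of_mem_take {α : Type*} {r : α → α → Prop} [IsAntisymm α r]
    {l : List α} (hl : l.Pairwise r) (m : ℕ) {z s : α} (hz : z ∈ l) (hs : s ∈ l.take m)
    (hrs : r z s) (hne : z ≠ s) : z ∈ l.take m := by
  have h2 : (l.take m ++ l.drop m).Pairwise r := by rwa [List.take_append_drop]
  rw [List.pairwise_append] at h2
  have hz' : z ∈ l.take m ++ l.drop m := by rwa [List.take_append_drop]
  rcases List.mem_append.1 hz' with h | h
  · exact h
  · exact absurd (antisymm hrs (h2.2.2 s hs z h)) hne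

lemma getElem_append_cons {β : Type*} (l₁ l₂ : List β) (a : β) {i : ℕ} (hi : i = l₁.length)
    (h : i < (l₁ ++ a :: l₂).length) : (l₁ ++ a :: l₂)[i] = a := by
  subst hi
  rw [List.getElem_append_right le_rfl]
  simp

/-- every linear extension of the labeled finite poset `(α, T)` has
an element labeled `t` at position `k` (1-indexed) iff every element `x` with
`a_x < k ≤ n - d_x` has label `t`, where `a_x` counts elements strictly below
`x` and `d_x` counts elements strictly above `x`. -/
theorem stmt2 {α L : Type*} [Fintype α] [PartialOrder α]
    (T : α → L) (t : L) (k : ℕ) (hk : 1 ≤ k ∧ k ≤ Fintype.card α) :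
    (∀ e : Fin (Fintype.card α) ≃ α, IsLinearExtension e →
        ∀ i : Fin (Fintype.card α), (i : ℕ) + 1 = k → T (e i) = t)
    ↔ (∀ x : α,
        ({z : α | z < x}.ncard < k ∧ k ≤ Fintype.card α - {z : α | x < z}.ncard) →
          T x = t) := by
  classical
  obtain ⟨hk1, hkn⟩ := hk
  set n := Fintype.card α with hn
  constructor
  · -- hard direction: construct a linear extension putting `x` at position `k`
    intro H x hx
    obtain ⟨r, hlin, hext⟩ := extend_partialOrder ((· ≤ ·) : α → α → Prop)
    haveI := hlin
    haveI : DecidableRel r := Classical.decRel r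
    set A : Finset α := Finset.univ.filter (fun z => z < x) with hA
    set B : Finset α := Finset.univ.filter (fun z => x < z) with hB
    have hncardA : {z : α | z < x}.ncard = A.card := by
      rw [Set.ncard_eq_toFinset_card', Set.toFinset_setOf]
    have hncardB : {z : α | x < z}.ncard = B.card := by
      rw [Set.ncard_eq_toFinset_card', Set.toFinset_setOf]
    rw [hncardA] at hx
    rw [hncardB] at hx
    obtain ⟨hax, hdx⟩ := hx
    set C : Finset α := Finset.univ \ insert x (A ∪ B) with hC
    have hCmem : ∀ z, z ∈ C ↔ ¬ z < x ∧ ¬ x < z ∧ z ≠ x := by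
      intro z
      simp only [hC, hA, hB, Finset.mem_sdiff, Finset.mem_univ, true_and,
        Finset.mem_insert, Finset.mem_union, Finset.mem_filter]
      tauto
    have hxA : x ∉ A := by simp [hA]
    have hxB : x ∉ B := by simp [hB]
    have hABdisj : Disjoint A B := by
      rw [Finset.disjoint_left]
      intro z hz1 hz2
      simp only [hA, hB, Finset.mem_filter, Finset.mem_univ, true_and] at hz1 hz2
      exact absurd (hz2.trans hz1) (lt_irrefl x)
    have hxAB : x ∉ A ∪ B := by simp [hxA, hxB]
    have hcard_ins : (insert x (A ∪ B)).card = A.card + B.card + 1 := by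
      rw [Finset.card_insert_of_notMem hxAB, Finset.card_union_of_disjoint hABdisj]
    have hcard_le : A.card + B.card + 1 ≤ n := by
      rw [hn, ← hcard_ins, ← Finset.card_univ]
      exact Finset.card_le_card (Finset.subset_univ _)
    have hCcard : C.card = n - (A.card + B.card + 1) := by
      rw [hC, Finset.card_sdiff_of_subset (Finset.subset_univ _), Finset.card_univ, hcard_ins]
    have hBn : B.card ≤ n := by
      rw [hn, ← Finset.card_univ]; exact Finset.card_le_card (Finset.subset_univ _)
    set m : ℕ := k - 1 - A.card with hm
    have hmC : m ≤ C.card := by omega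
    set ℓ : List α := C.sort r with hℓ
    have hℓlen : ℓ.length = C.card := Finset.length_sort r
    have hℓnd : ℓ.Nodup := Finset.sort_nodup C r
    have hℓsorted : ℓ.Pairwise r := Finset.pairwise_sort C r
    have htake_nd : (ℓ.take m).Nodup := hℓnd.sublist (List.take_sublist m ℓ)
    set Tk : Finset α := (ℓ.take m).toFinset with hTk
    have hTkC : Tk ⊆ C := by
      intro z hz
      rw [hTk, List.mem_toFinset] at hz
      have : z ∈ ℓ := (List.take_sublist m ℓ).mem hz
      rwa [hℓ, Finset.mem_sort] at this
    have hTkcard : Tk.card = m := by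
      rw [hTk, List.toFinset_card_of_nodup htake_nd, List.length_take, hℓlen]
      omega
    have hATk : Disjoint A Tk := by
      rw [Finset.disjoint_left]
      intro z hz1 hz2
      have := hTkC hz2
      rw [hCmem] at this
      rw [hA, Finset.mem_filter] at hz1
      exact this.1 hz1.2
    set S : Finset α := A ∪ Tk with hS
    have hScard : S.card = k - 1 := by
      rw [hS, Finset.card_union_of_disjoint hATk, hTkcard]
      omega
    have hxS : x ∉ S := by
      rw [hS, Finset.mem_union]
      rintro (h | h)
      · exact hxA h
      · exact ((hCmem x).1 (hTkC h)).2.2 rfl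
    -- S is a lower set
    have hSlow : ∀ z s : α, s ∈ S → z < s → z ∈ S := by
      intro z s hs hzs
      rcases Finset.mem_union.1 hs with hsA | hsT
      · rw [hA, Finset.mem_filter] at hsA
        exact Finset.mem_union_left _ (by
          rw [hA, Finset.mem_filter]; exact ⟨Finset.mem_univ _, hzs.trans hsA.2⟩)
      · have hsC := (hCmem s).1 (hTkC hsT)
        by_cases hzA : z < x
        · exact Finset.mem_union_left _ (by
            rw [hA, Finset.mem_filter]; exact ⟨Finset.mem_univ _, hzA⟩)
        · have hznx : z ≠ x := by
            rintro rfl; exact hsC.2.1 hzs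
          have hxz : ¬ x < z := fun h => hsC.2.1 (h.trans hzs)
          have hzC : z ∈ C := (hCmem z).2 ⟨hzA, hxz, hznx⟩
          have hzℓ : z ∈ ℓ := by rwa [hℓ, Finset.mem_sort]
          have hsTk : s ∈ ℓ.take m := by rwa [hTk, List.mem_toFinset] at hsT
          have : z ∈ ℓ.take m :=
            mem_take_of_rel_of_mem_take hℓsorted m hzℓ hsTk (hext z s hzs.le) (ne_of_lt hzs)
          exact Finset.mem_union_right _ (by rwa [hTk, List.mem_toFinset])
    set Rest : Finset α := Finset.univ \ insert x S with hRest
    have hRestMem : ∀ z, z ∈ Rest ↔ z ≠ x ∧ z ∉ S := by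
      intro z
      simp only [hRest, Finset.mem_sdiff, Finset.mem_univ, true_and, Finset.mem_insert]
      tauto
    have hRestCard : Rest.card = n - k := by
      rw [hRest, Finset.card_sdiff_of_subset (Finset.subset_univ _), Finset.card_univ,
        Finset.card_insert_of_notMem hxS, hScard]
      omega
    set final : List α := S.sort r ++ x :: Rest.sort r with hfinal
    have hSsortlen : (S.sort r).length = k - 1 := by rw [Finset.length_sort, hScard]
    have hlen : final.length = n := by
      rw [hfinal, List.length_append, List.length_cons, hSsortlen,
        Finset.length_sort, hRestCard]
      omega
    have hnd : final.Nodup := by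
      rw [hfinal, List.nodup_append]
      refine ⟨Finset.sort_nodup S r, ?_, ?_⟩
      · rw [List.nodup_cons]
        refine ⟨fun h => ?_, Finset.sort_nodup Rest r⟩
        rw [Finset.mem_sort] at h
        exact ((hRestMem x).1 h).1 rfl
      · intro a ha b hb hab
        subst hab
        rw [Finset.mem_sort] at ha
        rcases List.mem_cons.1 hb with rfl | hb
        · exact hxS ha
        · rw [Finset.mem_sort] at hb
          exact ((hRestMem a).1 hb).2 ha
    have hmemall : ∀ a : α, a ∈ final := by
      intro a
      rw [hfinal, List.mem_append, List.mem_cons]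
      by_cases haS : a ∈ S
      · exact Or.inl (by rwa [Finset.mem_sort])
      · by_cases hax' : a = x
        · exact Or.inr (Or.inl hax')
        · exact Or.inr (Or.inr (by
            rw [Finset.mem_sort, hRestMem]; exact ⟨hax', haS⟩))
    -- the pairwise "never decreasing backwards" property
    have hsortQ : ∀ s : Finset α, (s.sort r).Pairwise (fun u v => ¬ v < u) := by
      intro s
      have := (Finset.pairwise_sort s r).and (Finset.sort_nodup s r)
      exact this.imp (fun {a b} h hlt => h.2 (antisymm h.1 (hext b a hlt.le)))
    have hpw : final.Pairwise (fun u v => ¬ v < u) := by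
      rw [hfinal, List.pairwise_append]
      refine ⟨hsortQ S, ?_, ?_⟩
      · rw [List.pairwise_cons]
        refine ⟨fun b hb hlt => ?_, hsortQ Rest⟩
        rw [Finset.mem_sort] at hb
        have : b ∈ A := by rw [hA, Finset.mem_filter]; exact ⟨Finset.mem_univ _, hlt⟩
        exact ((hRestMem b).1 hb).2 (Finset.mem_union_left _ this)
      · intro a ha b hb hlt
        rw [Finset.mem_sort] at ha
        have hbS : b ∈ S := hSlow b a ha hlt
        rcases List.mem_cons.1 hb with rfl | hb
        · exact hxS hbS
        · rw [Finset.mem_sort] at hb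
          exact ((hRestMem b).1 hb).2 hbS
    -- build the equivalence
    set e0 : Fin final.length ≃ α := hnd.getEquivOfForallMemList _ hmemall with he0
    set e : Fin n ≃ α := (finCongr hlen.symm).trans e0 with he
    have he_apply : ∀ i : Fin n, e i = final.get (finCongr hlen.symm i) := fun i => rfl
    have hle : IsLinearExtension e := by
      intro i j hij
      by_contra hc
      push_neg at hc
      rcases lt_or_eq_of_le hc with hji | rfl
      · have := List.pairwise_iff_get.1 hpw (finCongr hlen.symm j) (finCongr hlen.symm i)
          (by exact hji)
        rw [← he_apply, ← he_apply] at this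
        exact this hij
      · exact lt_irrefl _ hij
    have hk1n : k - 1 < n := by omega
    have hgetx : e ⟨k - 1, hk1n⟩ = x := by
      have h0 : e ⟨k - 1, hk1n⟩ = final[(k - 1 : ℕ)]'(by rw [hlen]; exact hk1n) := rfl
      rw [h0]
      simp only [hfinal]
      exact getElem_append_cons _ _ _ hSsortlen.symm _
    have := H e hle ⟨k - 1, hk1n⟩ (by show k - 1 + 1 = k; omega)
    rwa [hgetx] at this
  · -- easy direction: counting
    intro H e he i hi
    apply H (e i)
    have hlow : {z : α | z < e i}.ncard ≤ (i : ℕ) := by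
      have h1 : {z : α | z < e i}.ncard = (e.symm '' {z : α | z < e i}).ncard :=
        (Set.ncard_image_of_injective _ e.symm.injective).symm
      have h2 : e.symm '' {z : α | z < e i} ⊆ Set.Iio i := by
        rintro j ⟨z, hz, rfl⟩
        exact he _ i (by simpa using hz)
      have h3 : (Set.Iio i).ncard = (i : ℕ) := by
        rw [← Finset.coe_Iio, Set.ncard_coe_finset, Fin.card_Iio]
      have h4 := Set.ncard_le_ncard h2 (Set.toFinite _)
      omega
    have hhigh : {z : α | e i < z}.ncard ≤ n - 1 - (i : ℕ) := by
      have h1 : {z : α | e i < z}.ncard = (e.symm '' {z : α | e i < z}).ncard :=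
        (Set.ncard_image_of_injective _ e.symm.injective).symm
      have h2 : e.symm '' {z : α | e i < z} ⊆ Set.Ioi i := by
        rintro j ⟨z, hz, rfl⟩
        exact he i _ (by simpa using hz)
      have h3 : (Set.Ioi i).ncard = n - 1 - (i : ℕ) := by
        rw [← Finset.coe_Ioi, Set.ncard_coe_finset, Fin.card_Ioi]
      have h4 := Set.ncard_le_ncard h2 (Set.toFinite _)
      omega
    have hin : (i : ℕ) < n := i.isLt
    omega
end

section
/- Let (M, ⊕, ε) be a cancellative monoid, let (P, T) be a labeled finite poset, and let h be an accumulation map into M. Then all linear extensions of P have the same accumulation result if and only if (P, T) has safe swaps with respect to h and ⊕. -/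
/-- The accumulation result of a linear extension `e` of a labeled finite poset
`(α, T)` with accumulation map `h` into a monoid: the ordered product
`h (T x₁) 1 * h (T x₂) 2 * ⋯ * h (T xₙ) n` (positions are 1-indexed). -/
def accumResult {α L M : Type*} [Fintype α] [PartialOrder α] [Monoid M]
    (T : α → L) (h : L → ℕ → M) (e : Fin (Fintype.card α) ≃ α) : M :=
  (List.ofFn fun i : Fin (Fintype.card α) => h (T (e i)) ((i : ℕ) + 1)).prod

/-- `(α, T)` has safe swaps with respect to `h` and the monoid operation: for
all distinct incomparable `x, y` and all consecutive positions `p, p+1` in the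
possible ranks `pr(x, y) = [a+1, n-d]`, swapping `x` and `y` at positions `p`
and `p+1` does not change the local accumulation result. -/
def HasSafeSwaps {α L M : Type*} [Fintype α] [PartialOrder α] [Monoid M]
    (T : α → L) (h : L → ℕ → M) : Prop :=
  ∀ x y : α, x ≠ y → ¬ x < y → ¬ y < x →
    ∀ p : ℕ,
      {z : α | z ≠ x ∧ z ≠ y ∧ (z < x ∨ z < y)}.ncard + 1 ≤ p →
      p + 1 ≤ Fintype.card α - {z : α | z ≠ x ∧ z ≠ y ∧ (x < z ∨ y < z)}.ncard →
      h (T x) p * h (T y) (p + 1) = h (T y) p * h (T x) (p + 1)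

section Aux

variable {α L M : Type*} [PartialOrder α] [Monoid M]

/-- accumulate a list starting at position `k`. -/
def accAux (T : α → L) (h : L → ℕ → M) : ℕ → List α → M
  | _, [] => 1
  | k, z :: l => h (T z) k * accAux T h (k + 1) l

variable (T : α → L) (h : L → ℕ → M)

@[simp] lemma accAux_nil (k : ℕ) : accAux T h k [] = 1 := rfl
@[simp] lemma accAux_cons (k : ℕ) (z : α) (l : List α) :
    accAux T h k (z :: l) = h (T z) k * accAux T h (k + 1) l := rfl

lemma accAux_append (k : ℕ) (l₁ l₂ : List α) :
    accAux T h k (l₁ ++ l₂) = accAux T h k l₁ * accAux T h (k + l₁.length) l₂ := by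
  induction l₁ generalizing k with
  | nil => simp
  | cons a l ih =>
      simp [ih (k + 1), mul_assoc, Nat.add_comm, Nat.add_left_comm, Nat.add_assoc]

lemma accAux_ofFn (n : ℕ) (g : Fin n → α) (k : ℕ) :
    accAux T h k (List.ofFn g) =
      (List.ofFn fun i : Fin n => h (T (g i)) (k + i)).prod := by
  induction n generalizing k with
  | zero => simp
  | succ n ih =>
      rw [List.ofFn_succ, List.ofFn_succ, accAux_cons, List.prod_cons, ih _ (k + 1)]
      simp only [Fin.val_zero, Nat.add_zero, Fin.val_succ]
      have : (fun i : Fin n => h (T (g i.succ)) (k + 1 + ↑i)) =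
          (fun i : Fin n => h (T (g i.succ)) (k + (↑i + 1))) := by
        funext i; congr 1; omega
      rw [this]

end Aux

section Poset

variable {α L M : Type*} [Fintype α] [PartialOrder α] [Monoid M]

/-- `l` is a full linear-extension list of `α`. -/
def FullLE (l : List α) : Prop :=
  l.Nodup ∧ (∀ z : α, z ∈ l) ∧ l.Pairwise (fun a b => ¬ b < a)

lemma FullLE.length_eq {l : List α} (hl : FullLE l) : l.length = Fintype.card α := by
  classical
  have h1 : l.toFinset = Finset.univ := by
    ext z; simp [hl.2.1 z]
  have := List.toFinset_card_of_nodup hl.1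
  rw [h1] at this
  simpa [Finset.card_univ] using this.symm

lemma exists_le_list (s : Finset α) :
    ∃ l : List α, l.length = s.card ∧ l.Nodup ∧ (∀ z, z ∈ l ↔ z ∈ s) ∧
      l.Pairwise (fun a b => ¬ b < a) := by
  classical
  induction s using Finset.strongInduction with
  | _ s ih =>
    rcases s.eq_empty_or_nonempty with rfl | hne
    · exact ⟨[], by simp⟩
    · obtain ⟨m, hm, hmin⟩ := s.exists_minimal hne
      obtain ⟨l, hlen, hnd, hmem, hpw⟩ := ih (s.erase m) (Finset.erase_ssubset hm)
      have hcard : s.card = (s.erase m).card + 1 := by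
        rw [Finset.card_erase_of_mem hm]
        have : 0 < s.card := Finset.card_pos.mpr hne
        omega
      refine ⟨m :: l, by simp [hlen, hcard], ?_, ?_, ?_⟩
      · refine List.nodup_cons.mpr ⟨?_, hnd⟩
        intro hmem'
        exact (Finset.mem_erase.mp ((hmem m).mp hmem')).1 rfl
      · intro z
        simp only [List.mem_cons, hmem, Finset.mem_erase]
        constructor
        · rintro (rfl | ⟨_, hz⟩) <;> [exact hm; exact hz]
        · intro hz
          by_cases hzm : z = m
          · exact Or.inl hzm
          · exact Or.inr ⟨hzm, hz⟩
      · refine List.pairwise_cons.mpr ⟨?_, hpw⟩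
        intro w hw
        exact fun hlt => lt_irrefl w (lt_of_lt_of_le hlt (hmin (Finset.mem_erase.mp ((hmem w).mp hw)).2 hlt.le))

end Poset

section Swap

variable {α L M : Type*} [Fintype α] [PartialOrder α] [Monoid M]
variable (T : α → L) (h : L → ℕ → M)

lemma ncard_le_length {P : α → Prop} {l : List α} (hnd : l.Nodup)
    (hsub : ∀ z, P z → z ∈ l) : {z : α | P z}.ncard ≤ l.length := by
  classical
  have h1 : {z : α | P z} ⊆ ↑l.toFinset := by
    intro z hz; simpa using hsub z hz
  calc {z : α | P z}.ncard ≤ (↑l.toFinset : Set α).ncard :=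
        Set.ncard_le_ncard h1 (l.toFinset : Set α).toFinite
    _ = l.toFinset.card := Set.ncard_coe_finset _
    _ = l.length := List.toFinset_card_of_nodup hnd

lemma pairwise_swap {R : α → α → Prop} {s u v : List α} {z b : α}
    (hp : (s ++ (u ++ z :: b :: v)).Pairwise R) (hbz : R b z) :
    (s ++ (u ++ b :: z :: v)).Pairwise R := by
  simp only [List.pairwise_append, List.pairwise_cons, List.mem_cons, List.mem_append] at hp ⊢
  refine ⟨hp.1, ⟨hp.2.1.1, ⟨?_, ?_, hp.2.1.2.1.2.2⟩, ?_⟩, ?_⟩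
  · rintro a' (rfl | hw)
    · exact hbz
    · exact hp.2.1.2.1.2.1 a' hw
  · intro a' hw
    exact hp.2.1.2.1.1 a' (Or.inr hw)
  · rintro a ha w (rfl | rfl | hw)
    · exact hp.2.1.2.2 a ha _ (Or.inr (Or.inl rfl))
    · exact hp.2.1.2.2 a ha _ (Or.inl rfl)
    · exact hp.2.1.2.2 a ha _ (Or.inr (Or.inr hw))
  · rintro a ha w (hw | rfl | rfl | hw)
    · exact hp.2.2 a ha _ (Or.inl hw)
    · exact hp.2.2 a ha _ (Or.inr (Or.inr (Or.inl rfl)))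
    · exact hp.2.2 a ha _ (Or.inr (Or.inl rfl))
    · exact hp.2.2 a ha _ (Or.inr (Or.inr (Or.inr hw)))

lemma swap_step (hs : HasSafeSwaps T h) {s u v : List α} {z b : α}
    (hF : FullLE (s ++ (u ++ z :: b :: v))) (hzb : ¬ z < b) :
    FullLE (s ++ (u ++ b :: z :: v)) ∧
      accAux T h (s.length + 1) (u ++ z :: b :: v) =
        accAux T h (s.length + 1) (u ++ b :: z :: v) := by
  classical
  obtain ⟨hnd, hcomp, hpw0⟩ := hF
  have hpw := hpw0
  simp only [List.pairwise_append, List.pairwise_cons, List.mem_cons, List.mem_append] at hpw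
  -- nodup of sub-blocks
  have hsubzbv : List.Sublist (z :: b :: v) (s ++ (u ++ z :: b :: v)) :=
    (List.sublist_append_right u _).trans (List.sublist_append_right s _)
  have hndzbv : (z :: b :: v).Nodup := hsubzbv.nodup hnd
  have hzbmem : z ≠ b := by
    have := (List.nodup_cons.mp hndzbv).1
    intro hzb'; exact this (hzb' ▸ (List.mem_cons_self (a := b) (l := v)))
  have hbz : ¬ b < z := hpw.2.1.2.1.1 b (Or.inl rfl)
  set p : ℕ := s.length + u.length + 1 with hp
  have hbelow : ∀ w, w ≠ z ∧ w ≠ b ∧ (w < z ∨ w < b) → w ∈ s ++ u := by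
    intro w ⟨hwz, hwb, hlt⟩
    have hwmem := hcomp w
    rw [List.mem_append, List.mem_append, List.mem_cons, List.mem_cons] at hwmem
    rcases hwmem with hw | hw | rfl | rfl | hw
    · exact List.mem_append.mpr (Or.inl hw)
    · exact List.mem_append.mpr (Or.inr hw)
    · exact absurd rfl hwz
    · exact absurd rfl hwb
    · exfalso
      rcases hlt with hlt | hlt
      · exact hpw.2.1.2.1.1 w (Or.inr hw) hlt
      · exact hpw.2.1.2.1.2.1 w hw hlt
  have habove : ∀ w, w ≠ z ∧ w ≠ b ∧ (z < w ∨ b < w) → w ∈ v := by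
    intro w ⟨hwz, hwb, hlt⟩
    have hwmem := hcomp w
    rw [List.mem_append, List.mem_append, List.mem_cons, List.mem_cons] at hwmem
    rcases hwmem with hw | hw | rfl | rfl | hw
    · exfalso
      rcases hlt with hlt | hlt
      · exact hpw.2.2 w hw z (Or.inr (Or.inl rfl)) hlt
      · exact hpw.2.2 w hw b (Or.inr (Or.inr (Or.inl rfl))) hlt
    · exfalso
      rcases hlt with hlt | hlt
      · exact hpw.2.1.2.2 w hw z (Or.inl rfl) hlt
      · exact hpw.2.1.2.2 w hw b (Or.inr (Or.inl rfl)) hlt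
    · exact absurd rfl hwz
    · exact absurd rfl hwb
    · exact hw
  have hlen : (s ++ (u ++ z :: b :: v)).length = Fintype.card α :=
    FullLE.length_eq ⟨hnd, hcomp, hpw0⟩
  have hn : Fintype.card α = s.length + u.length + 2 + v.length := by
    simp only [List.length_append, List.length_cons] at hlen
    omega
  have ha : {w : α | w ≠ z ∧ w ≠ b ∧ (w < z ∨ w < b)}.ncard + 1 ≤ p := by
    have hsu : (s ++ u).Nodup :=
      ((List.sublist_append_left u (z :: b :: v)).append_left s).nodup hnd
    have hb : {w : α | w ≠ z ∧ w ≠ b ∧ (w < z ∨ w < b)}.ncard ≤ (s ++ u).length :=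
      ncard_le_length hsu (fun w hw => hbelow w hw)
    simp only [List.length_append] at hb
    omega
  have hd : p + 1 ≤ Fintype.card α - {w : α | w ≠ z ∧ w ≠ b ∧ (z < w ∨ b < w)}.ncard := by
    have hvnd : v.Nodup := (List.nodup_cons.mp (List.nodup_cons.mp hndzbv).2).2
    have hb : {w : α | w ≠ z ∧ w ≠ b ∧ (z < w ∨ b < w)}.ncard ≤ v.length :=
      ncard_le_length hvnd (fun w hw => habove w hw)
    omega
  have hswap := hs z b hzbmem hzb hbz p ha hd
  have hpos : s.length + 1 + u.length = p := by omega
  constructor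
  · refine ⟨?_, ?_, pairwise_swap hpw0 hzb⟩
    · exact ((List.Perm.append_left s (List.Perm.append_left u
        (List.Perm.swap b z v)))).nodup hnd
    · intro w
      exact ((List.Perm.append_left s (List.Perm.append_left u
        (List.Perm.swap b z v)))).mem_iff.mp (hcomp w)
  · have key : accAux T h p (z :: b :: v) = accAux T h p (b :: z :: v) := by
      simp only [accAux_cons]
      rw [← mul_assoc, ← mul_assoc, hswap]
    rw [accAux_append, accAux_append, hpos, key]

end Swap

section Main

variable {α L M : Type*} [Fintype α] [PartialOrder α] [Monoid M]
variable (T : α → L) (h : L → ℕ → M)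

lemma bubble (hs : HasSafeSwaps T h) :
    ∀ u s v : List α, ∀ b : α, FullLE (s ++ (u ++ b :: v)) → (∀ w ∈ u, ¬ w < b) →
      FullLE (s ++ (b :: (u ++ v))) ∧
        accAux T h (s.length + 1) (u ++ b :: v) =
          accAux T h (s.length + 1) (b :: (u ++ v)) := by
  intro u
  induction u using List.reverseRecOn with
  | nil => intro s v b hF _; exact ⟨hF, rfl⟩
  | append_singleton u' z ih =>
      intro s v b hF hmin
      have hzb : ¬ z < b := hmin z (by simp)
      have h1 : (u' ++ [z]) ++ b :: v = u' ++ z :: b :: v := by simp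
      rw [h1] at hF ⊢
      obtain ⟨hF', hacc'⟩ := swap_step T h hs hF hzb
      have h2 : u' ++ b :: z :: v = u' ++ (b :: (z :: v)) := rfl
      obtain ⟨hF'', hacc''⟩ := ih s (z :: v) b hF'
        (fun w hw => hmin w (by simp [hw]))
      refine ⟨?_, ?_⟩
      · have : u' ++ z :: v = (u' ++ [z]) ++ v := by simp
        rwa [← this]
      · rw [hacc', hacc'']
        have : u' ++ z :: v = (u' ++ [z]) ++ v := by simp
        rw [this]

lemma main_ind (hs : HasSafeSwaps T h) :
    ∀ l₂ l₁ s : List α, FullLE (s ++ l₁) → FullLE (s ++ l₂) → l₁.Perm l₂ →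
      accAux T h (s.length + 1) l₁ = accAux T h (s.length + 1) l₂ := by
  intro l₂
  induction l₂ with
  | nil => intro l₁ s _ _ hperm; rw [hperm.eq_nil]  -- l₁ = []
  | cons b t₂ ih =>
      intro l₁ s hF₁ hF₂ hperm
      have hb₁ : b ∈ l₁ := hperm.mem_iff.mpr ((List.mem_cons_self (a := b) (l := t₂)))
      obtain ⟨u, v, rfl⟩ := List.append_of_mem hb₁
      -- b is minimal among elements of u
      have hnd₂ : (s ++ b :: t₂).Nodup := hF₂.1
      have hmin : ∀ w ∈ u, ¬ w < b := by
        intro w hw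
        have hw₁ : w ∈ u ++ b :: v := List.mem_append.mpr (Or.inl hw)
        have hwb : w ≠ b := by
          have hnd₁ : (u ++ b :: v).Nodup :=
            ((List.sublist_append_right s _).nodup hF₁.1)
          intro hwb'
          subst hwb'
          exact (List.disjoint_of_nodup_append hnd₁) hw ((List.mem_cons_self (a := w) (l := v)))
        have hwt₂ : w ∈ t₂ := by
          have := hperm.mem_iff.mp hw₁
          rcases List.mem_cons.mp this with h' | h'
          · exact absurd h' hwb
          · exact h'
        -- in s ++ b :: t₂, b comes before w (w ∈ t₂), pairwise gives ¬ w < b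
        have hpw₂ := hF₂.2.2
        simp only [List.pairwise_append, List.pairwise_cons] at hpw₂
        exact hpw₂.2.1.1 w hwt₂
      obtain ⟨hF₁', hacc₁⟩ := bubble T h hs u s v b hF₁ hmin
      have hperm' : (u ++ v).Perm t₂ := by
        have h1 : (u ++ b :: v).Perm (b :: (u ++ v)) := List.perm_middle
        exact (h1.symm.trans hperm).cons_inv
      have hF₁'' : FullLE ((s ++ [b]) ++ (u ++ v)) := by
        simpa [List.append_assoc] using hF₁'
      have hF₂' : FullLE ((s ++ [b]) ++ t₂) := by
        simpa [List.append_assoc] using hF₂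
      have hih := ih (u ++ v) (s ++ [b]) hF₁'' hF₂' hperm'
      rw [hacc₁]
      simp only [accAux_cons]
      have h2 : s.length + 1 + 1 = (s ++ [b]).length + 1 := by simp
      rw [h2, hih]

end Main

section Glue

variable {α L M : Type*} [Fintype α] [PartialOrder α] [Monoid M]
variable (T : α → L) (h : L → ℕ → M)

lemma ofFn_cast {β : Type*} {m n : ℕ} (hmn : m = n) (f : Fin n → β) :
    List.ofFn (fun i : Fin m => f (Fin.cast hmn i)) = List.ofFn f := by
  subst hmn; rfl

lemma fullLE_ofFn (e : Fin (Fintype.card α) ≃ α) (he : IsLinearExtension e) :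
    FullLE (List.ofFn ⇑e) := by
  refine ⟨List.nodup_ofFn.mpr e.injective, ?_, ?_⟩
  · intro z
    rw [List.mem_ofFn]
    exact ⟨e.symm z, e.apply_symm_apply z⟩
  · rw [List.pairwise_iff_get]
    intro i j hij
    rw [List.get_ofFn, List.get_ofFn]
    intro hlt
    have h2 := he _ _ hlt
    simp only [Fin.lt_def, Fin.coe_cast] at h2 hij
    omega

lemma accumResult_eq_accAux (e : Fin (Fintype.card α) ≃ α) :
    accumResult T h e = accAux T h 1 (List.ofFn ⇑e) := by
  rw [accAux_ofFn]
  unfold accumResult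
  have : (fun i : Fin (Fintype.card α) => h (T (e i)) ((i : ℕ) + 1)) =
      (fun i : Fin (Fintype.card α) => h (T (e i)) (1 + (i : ℕ))) := by
    funext i; congr 1; omega
  rw [this]

lemma exists_equiv_of_fullLE (l : List α) (hF : FullLE l) :
    ∃ e : Fin (Fintype.card α) ≃ α, IsLinearExtension e ∧
      accumResult T h e = accAux T h 1 l := by
  classical
  have hc : l.length = Fintype.card α := hF.length_eq
  let g : Fin l.length ≃ α := List.Nodup.getEquivOfForallMemList l hF.1 hF.2.1
  have hg : ∀ i, g i = l.get i := fun _ => rfl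
  refine ⟨(finCongr hc.symm).trans g, ?_, ?_⟩
  · intro i j hlt
    simp only [Equiv.trans_apply, finCongr_apply, hg] at hlt
    by_contra hij
    push_neg at hij
    rcases eq_or_lt_of_le hij with heq | hlt'
    · have heq' : (Fin.cast hc.symm i) = (Fin.cast hc.symm j) := by
        apply Fin.ext
        simp only [Fin.coe_cast]
        exact congrArg Fin.val heq.symm
      rw [heq'] at hlt
      exact lt_irrefl _ hlt
    · have hpw := List.pairwise_iff_get.mp hF.2.2
      have hij' : (Fin.cast hc.symm j) < (Fin.cast hc.symm i) := by
        rw [Fin.lt_def, Fin.coe_cast, Fin.coe_cast]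
        exact hlt'
      exact hpw _ _ hij' hlt
  · have hfun : ⇑((finCongr hc.symm).trans g) =
        fun i : Fin (Fintype.card α) => l.get (Fin.cast hc.symm i) := by
      funext i; rfl
    rw [accumResult_eq_accAux, hfun, ofFn_cast hc.symm l.get, List.ofFn_get]

end Glue

section Construct

variable {α : Type*} [Fintype α] [PartialOrder α]

/-- a complete list of the right length is nodup -/
lemma nodup_of_complete_of_length {l : List α}
    (hcomp : ∀ z : α, z ∈ l) (hlen : l.length = Fintype.card α) : l.Nodup := by
  classical
  have h1 : l.toFinset = Finset.univ := by ext z; simp [hcomp z]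
  have h2 : l.dedup.length = l.length := by
    rw [← List.card_toFinset, h1, Finset.card_univ, hlen]
  rw [← List.dedup_eq_self]
  exact (List.dedup_sublist l).eq_of_length h2

lemma exists_adjacent_lists (x y : α) (hne : x ≠ y) (hxy : ¬ x < y) (hyx : ¬ y < x)
    (p : ℕ) (hp1 : {z : α | z ≠ x ∧ z ≠ y ∧ (z < x ∨ z < y)}.ncard + 1 ≤ p)
    (hp2 : p + 1 ≤ Fintype.card α - {z : α | z ≠ x ∧ z ≠ y ∧ (x < z ∨ y < z)}.ncard) :
    ∃ pre post : List α, pre.length + 1 = p ∧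
      FullLE (pre ++ (x :: y :: post)) ∧ FullLE (pre ++ (y :: x :: post)) := by
  classical
  set FA : Finset α := Finset.univ.filter (fun z => z ≠ x ∧ z ≠ y ∧ (z < x ∨ z < y)) with hFA
  set FD : Finset α := Finset.univ.filter (fun z => z ≠ x ∧ z ≠ y ∧ (x < z ∨ y < z)) with hFD
  set FF : Finset α := Finset.univ.filter
    (fun z => z ≠ x ∧ z ≠ y ∧ ¬(z < x ∨ z < y) ∧ ¬(x < z ∨ y < z)) with hFF
  have hncA : {z : α | z ≠ x ∧ z ≠ y ∧ (z < x ∨ z < y)}.ncard = FA.card := by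
    rw [Set.ncard_eq_toFinset_card']; simp [hFA, Set.toFinset_setOf]
  have hncD : {z : α | z ≠ x ∧ z ≠ y ∧ (x < z ∨ y < z)}.ncard = FD.card := by
    rw [Set.ncard_eq_toFinset_card']; simp [hFD, Set.toFinset_setOf]
  rw [hncA] at hp1
  rw [hncD] at hp2
  -- cardinality of FF
  have hFFeq : FF = Finset.univ \ ((FA ∪ FD) ∪ {x, y}) := by
    ext z
    simp only [hFA, hFD, hFF, Finset.mem_filter, Finset.mem_univ, true_and, Finset.mem_sdiff,
      Finset.mem_union, Finset.mem_insert, Finset.mem_singleton]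
    tauto
  have hdisjAD : Disjoint FA FD := by
    rw [Finset.disjoint_left]
    intro z hzA hzD
    simp only [hFA, hFD, Finset.mem_filter, Finset.mem_univ, true_and] at hzA hzD
    rcases hzA.2.2 with h1 | h1 <;> rcases hzD.2.2 with h2 | h2
    · exact absurd (lt_trans h2 h1) (lt_irrefl x)
    · exact hyx (lt_trans h2 h1)
    · exact hxy (lt_trans h2 h1)
    · exact absurd (lt_trans h2 h1) (lt_irrefl y)
  have hdisjXY : Disjoint (FA ∪ FD) ({x, y} : Finset α) := by
    rw [Finset.disjoint_right]
    intro z hz hz'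
    rcases Finset.mem_insert.mp hz with rfl | hz2
    · rcases Finset.mem_union.mp hz' with h' | h' <;>
        · simp only [hFA, hFD, Finset.mem_filter] at h'; exact h'.2.1 rfl
    · rw [Finset.mem_singleton] at hz2; subst hz2
      rcases Finset.mem_union.mp hz' with h' | h' <;>
        · simp only [hFA, hFD, Finset.mem_filter] at h'; exact h'.2.2.1 rfl
  have hcardFF : FF.card = Fintype.card α - (FA.card + FD.card + 2) := by
    rw [hFFeq, Finset.card_sdiff_of_subset (Finset.subset_univ _), Finset.card_univ,
      Finset.card_union_of_disjoint hdisjXY, Finset.card_union_of_disjoint hdisjAD,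
      Finset.card_pair hne]
  -- lists
  obtain ⟨lA, hlenA, hndA, hmemA, hpwA⟩ := exists_le_list FA
  obtain ⟨lF, hlenF, hndF, hmemF, hpwF⟩ := exists_le_list FF
  obtain ⟨lD, hlenD, hndD, hmemD, hpwD⟩ := exists_le_list FD
  -- membership characterizations
  have hA : ∀ w ∈ lA, w ≠ x ∧ w ≠ y ∧ (w < x ∨ w < y) := by
    intro w hw; have := (hmemA w).mp hw
    simpa [hFA] using this
  have hD : ∀ w ∈ lD, w ≠ x ∧ w ≠ y ∧ (x < w ∨ y < w) := by
    intro w hw; have := (hmemD w).mp hw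
    simpa [hFD] using this
  have hFm : ∀ w ∈ lF, w ≠ x ∧ w ≠ y ∧ ¬(w < x ∨ w < y) ∧ ¬(x < w ∨ y < w) := by
    intro w hw; have := (hmemF w).mp hw
    simpa [hFF] using this
  obtain ⟨q, hq⟩ : ∃ q, p = FA.card + q + 1 := ⟨p - FA.card - 1, by omega⟩
  have hqF : q ≤ lF.length := by
    rw [hlenF]
    omega
  set lF₁ := lF.take q with hlF₁
  set lF₂ := lF.drop q with hlF₂
  -- order facts
  have oAF : ∀ a, (a ≠ x ∧ a ≠ y ∧ (a < x ∨ a < y)) →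
      ∀ c, (c ≠ x ∧ c ≠ y ∧ ¬(c < x ∨ c < y) ∧ ¬(x < c ∨ y < c)) → ¬ c < a := by
    intro a ha c hc hca
    rcases ha.2.2 with h1 | h1
    · exact hc.2.2.1 (Or.inl (lt_trans hca h1))
    · exact hc.2.2.1 (Or.inr (lt_trans hca h1))
  have oAx : ∀ a, (a ≠ x ∧ a ≠ y ∧ (a < x ∨ a < y)) → ¬ x < a ∧ ¬ y < a := by
    intro a ha
    constructor <;> intro hlt
    · rcases ha.2.2 with h1 | h1
      · exact absurd (lt_trans hlt h1) (lt_irrefl x)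
      · exact hxy (lt_trans hlt h1)
    · rcases ha.2.2 with h1 | h1
      · exact hyx (lt_trans hlt h1)
      · exact absurd (lt_trans hlt h1) (lt_irrefl y)
  have oAD : ∀ a, (a ≠ x ∧ a ≠ y ∧ (a < x ∨ a < y)) →
      ∀ c, (c ≠ x ∧ c ≠ y ∧ (x < c ∨ y < c)) → ¬ c < a := by
    intro a ha c hc hca
    rcases ha.2.2 with h1 | h1 <;> rcases hc.2.2 with h2 | h2
    · exact absurd (lt_trans h2 (lt_trans hca h1)) (lt_irrefl x)
    · exact hyx (lt_trans h2 (lt_trans hca h1))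
    · exact hxy (lt_trans h2 (lt_trans hca h1))
    · exact absurd (lt_trans h2 (lt_trans hca h1)) (lt_irrefl y)
  have oFD : ∀ a, (a ≠ x ∧ a ≠ y ∧ ¬(a < x ∨ a < y) ∧ ¬(x < a ∨ y < a)) →
      ∀ c, (c ≠ x ∧ c ≠ y ∧ (x < c ∨ y < c)) → ¬ c < a := by
    intro a ha c hc hca
    rcases hc.2.2 with h1 | h1
    · exact ha.2.2.2 (Or.inl (lt_trans h1 hca))
    · exact ha.2.2.2 (Or.inr (lt_trans h1 hca))
  have oxD : ∀ c, (c ≠ x ∧ c ≠ y ∧ (x < c ∨ y < c)) → ¬ c < x ∧ ¬ c < y := by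
    intro c hc
    constructor <;> intro hlt <;> rcases hc.2.2 with h1 | h1
    · exact absurd (lt_trans h1 hlt) (lt_irrefl x)
    · exact hyx (lt_trans h1 hlt)
    · exact hxy (lt_trans h1 hlt)
    · exact absurd (lt_trans h1 hlt) (lt_irrefl y)
  -- memberships of take/drop
  have hF1m : ∀ w ∈ lF₁, w ≠ x ∧ w ≠ y ∧ ¬(w < x ∨ w < y) ∧ ¬(x < w ∨ y < w) :=
    fun w hw => hFm w (List.take_subset q lF hw)
  have hF2m : ∀ w ∈ lF₂, w ≠ x ∧ w ≠ y ∧ ¬(w < x ∨ w < y) ∧ ¬(x < w ∨ y < w) :=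
    fun w hw => hFm w (List.drop_subset q lF hw)
  -- split pairwise of lF
  have hpwF' := hpwF
  rw [← List.take_append_drop q lF] at hpwF'
  obtain ⟨pw₁, pw₂, crossF⟩ := List.pairwise_append.mp hpwF'
  -- completeness
  have hcomp : ∀ z : α, z ∈ (lA ++ lF₁) ++ (x :: y :: (lF₂ ++ lD)) := by
    intro z
    simp only [List.mem_append, List.mem_cons]
    by_cases hzx : z = x
    · tauto
    by_cases hzy : z = y
    · tauto
    by_cases hzA : z < x ∨ z < y
    · have : z ∈ lA := (hmemA z).mpr (by simp [hFA, hzx, hzy, hzA])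
      tauto
    by_cases hzD : x < z ∨ y < z
    · have : z ∈ lD := (hmemD z).mpr (by simp [hFD, hzx, hzy, hzD])
      tauto
    · have hzF : z ∈ lF := (hmemF z).mpr (by
        simp only [hFF, Finset.mem_filter, Finset.mem_univ, true_and]
        exact ⟨hzx, hzy, hzA, hzD⟩)
      rw [← List.take_append_drop q lF, List.mem_append] at hzF
      tauto
  -- length
  have hlen : ((lA ++ lF₁) ++ (x :: y :: (lF₂ ++ lD))).length = Fintype.card α := by
    simp only [List.length_append, List.length_cons, hlenA, hlenD, hlF₁, hlF₂,
      List.length_take, List.length_drop, hlenF]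
    omega
  have hnd : ((lA ++ lF₁) ++ (x :: y :: (lF₂ ++ lD))).Nodup :=
    nodup_of_complete_of_length hcomp hlen
  -- pairwise
  have hpw : ((lA ++ lF₁) ++ (x :: y :: (lF₂ ++ lD))).Pairwise (fun a b => ¬ b < a) := by
    refine List.pairwise_append.mpr ⟨?_, ?_, ?_⟩
    · refine List.pairwise_append.mpr ⟨hpwA, pw₁, ?_⟩
      intro a ha c hc
      exact oAF a (hA a ha) c (hF1m c hc)
    · refine List.pairwise_cons.mpr ⟨?_, List.pairwise_cons.mpr ⟨?_, ?_⟩⟩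
      · intro c hc
        rcases List.mem_cons.mp hc with rfl | hc'
        · exact hyx
        rcases List.mem_append.mp hc' with hc2 | hc2
        · exact fun hlt => (hF2m c hc2).2.2.1 (Or.inl hlt)
        · exact (oxD c (hD c hc2)).1
      · intro c hc
        rcases List.mem_append.mp hc with hc2 | hc2
        · exact fun hlt => (hF2m c hc2).2.2.1 (Or.inr hlt)
        · exact (oxD c (hD c hc2)).2
      · refine List.pairwise_append.mpr ⟨pw₂, hpwD, ?_⟩
        intro a ha c hc
        exact oFD a (hF2m a ha) c (hD c hc)
    · intro a ha c hc
      rcases List.mem_append.mp ha with haA | haF1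
      · rcases List.mem_cons.mp hc with rfl | hc'
        · exact (oAx a (hA a haA)).1
        rcases List.mem_cons.mp hc' with rfl | hc''
        · exact (oAx a (hA a haA)).2
        rcases List.mem_append.mp hc'' with hc2 | hc2
        · exact oAF a (hA a haA) c (hF2m c hc2)
        · exact oAD a (hA a haA) c (hD c hc2)
      · rcases List.mem_cons.mp hc with rfl | hc'
        · exact fun hlt => (hF1m a haF1).2.2.2 (Or.inl hlt)
        rcases List.mem_cons.mp hc' with rfl | hc''
        · exact fun hlt => (hF1m a haF1).2.2.2 (Or.inr hlt)
        rcases List.mem_append.mp hc'' with hc2 | hc2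
        · exact crossF a haF1 c hc2
        · exact oFD a (hF1m a haF1) c (hD c hc2)
  have hFull1 : FullLE ((lA ++ lF₁) ++ (x :: y :: (lF₂ ++ lD))) := ⟨hnd, hcomp, hpw⟩
  have hperm : ((lA ++ lF₁) ++ (x :: y :: (lF₂ ++ lD))).Perm
      ((lA ++ lF₁) ++ (y :: x :: (lF₂ ++ lD))) :=
    List.Perm.append_left _ (List.Perm.swap y x _)
  have hFull2 : FullLE ((lA ++ lF₁) ++ (y :: x :: (lF₂ ++ lD))) := by
    refine ⟨hperm.nodup hnd, fun z => hperm.mem_iff.mp (hcomp z), ?_⟩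
    have := pairwise_swap (s := lA ++ lF₁) (u := ([] : List α)) (v := lF₂ ++ lD)
      (z := x) (b := y) (by simpa using hpw) hxy
    simpa using this
  have hlenpre : (lA ++ lF₁).length + 1 = p := by
    simp only [List.length_append, hlenA, hlF₁, List.length_take]
    omega
  exact ⟨lA ++ lF₁, lF₂ ++ lD, hlenpre, hFull1, hFull2⟩

end Construct

/-- over a cancellative monoid, all linear extensions of a labeled
finite poset have the same accumulation result iff the poset has safe swaps. -/
theorem stmt4 {α L M : Type*} [Fintype α] [PartialOrder α] [CancelMonoid M]
    (T : α → L) (h : L → ℕ → M) :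
    (∀ e₁ e₂ : Fin (Fintype.card α) ≃ α,
        IsLinearExtension e₁ → IsLinearExtension e₂ →
        accumResult T h e₁ = accumResult T h e₂)
    ↔ HasSafeSwaps T h := by
  constructor
  · intro hEq x y hne hxy hyx p hp1 hp2
    obtain ⟨pre, post, hlenpre, hF1, hF2⟩ := exists_adjacent_lists x y hne hxy hyx p hp1 hp2
    obtain ⟨e₁, he₁, hacc₁⟩ := exists_equiv_of_fullLE T h _ hF1
    obtain ⟨e₂, he₂, hacc₂⟩ := exists_equiv_of_fullLE T h _ hF2
    have heq := hEq e₁ e₂ he₁ he₂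
    rw [hacc₁, hacc₂, accAux_append, accAux_append] at heq
    have hk : 1 + pre.length = p := by omega
    rw [hk] at heq
    simp only [accAux_cons] at heq
    have h1 := mul_left_cancel heq
    rw [← mul_assoc, ← mul_assoc] at h1
    exact mul_right_cancel h1
  · intro hs e₁ e₂ he₁ he₂
    have hF₁ := fullLE_ofFn e₁ he₁
    have hF₂ := fullLE_ofFn e₂ he₂
    rw [accumResult_eq_accAux, accumResult_eq_accAux]
    have hperm : (List.ofFn ⇑e₁).Perm (List.ofFn ⇑e₂) :=
      (List.perm_ext_iff_of_nodup hF₁.1 hF₂.1).mpr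
        (fun a => by simp only [hF₁.2.1 a, hF₂.2.1 a])
    exact main_ind T h hs (List.ofFn ⇑e₂) (List.ofFn ⇑e₁) [] hF₁ hF₂ hperm
end

section
/- For any poset (ID, <) and indistinguishable antichains A_1, A_2 ⊆ ID with A_1 ∩ A_2 ≠ ∅, the union A_1 ∪ A_2 is an indistinguishable antichain of (ID, <). -/
/-- A subset `A` of a poset is an indistinguishable antichain if it is an
antichain (no two of its elements are comparable) and all of its elements
compare in the same way to any element outside of `A`. -/
def IsIndisAntichain {γ : Type*} [Preorder γ] (A : Set γ) : Prop :=
  IsAntichain (· < ·) A ∧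
    ∀ x ∈ A, ∀ y ∈ A, ∀ z ∉ A, (x < z ↔ y < z) ∧ (z < x ↔ z < y)

/-- the union of two intersecting indistinguishable antichains is
an indistinguishable antichain. -/
theorem stmt9 {γ : Type*} [PartialOrder γ] (A₁ A₂ : Set γ)
    (h₁ : IsIndisAntichain A₁) (h₂ : IsIndisAntichain A₂)
    (hint : (A₁ ∩ A₂).Nonempty) :
    IsIndisAntichain (A₁ ∪ A₂) := by
  obtain ⟨w, hw1, hw2⟩ := hint
  have key : ∀ x ∈ A₁ ∪ A₂, ∀ z ∉ A₁ ∪ A₂, (x < z ↔ w < z) ∧ (z < x ↔ z < w) := by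
    rintro x (hx | hx) z hz
    · exact h₁.2 x hx w hw1 z (fun h => hz (Or.inl h))
    · exact h₂.2 x hx w hw2 z (fun h => hz (Or.inr h))
  constructor
  · rintro x hx y hy hxy hlt
    rcases hx with hx | hx <;> rcases hy with hy | hy
    · exact h₁.1 hx hy hxy hlt
    · by_cases hy1 : y ∈ A₁
      · exact h₁.1 hx hy1 hxy hlt
      · have hwy : w < y := (h₁.2 x hx w hw1 y hy1).1.mp hlt
        exact h₂.1 hw2 hy (fun h => by subst h; exact lt_irrefl _ hwy) hwy
    · by_cases hx1 : x ∈ A₁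
      · exact h₁.1 hx1 hy hxy hlt
      · have hxw : x < w := (h₁.2 y hy w hw1 x hx1).2.mp hlt
        exact h₂.1 hx hw2 (fun h => by subst h; exact lt_irrefl _ hxw) hxw
    · exact h₂.1 hx hy hxy hlt
  · intro x hx y hy z hz
    obtain ⟨k1, k2⟩ := key x hx z hz
    obtain ⟨k3, k4⟩ := key y hy z hz
    exact ⟨k1.trans k3.symm, k2.trans k4.symm⟩
end

section
/- Let P be a finite poset and let A be an ia-partition of P such that for no two distinct classes A_1 ≠ A_2 of A the union A_1 ∪ A_2 is an indistinguishable antichain of P. Then A has minimum cardinality among all ia-partitions of P, i.e., the cardinality of A equals the ia-width of P. -/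
/-- An ia-partition of a poset: a partition of all its elements into (nonempty)
indistinguishable antichains. -/
def IsIAPartition {γ : Type*} [Preorder γ] (𝒜 : Finset (Set γ)) : Prop :=
  (∀ A ∈ 𝒜, A.Nonempty ∧ IsIndisAntichain A) ∧
  (∀ A ∈ 𝒜, ∀ B ∈ 𝒜, A ≠ B → Disjoint A B) ∧
  (⋃ A ∈ 𝒜, A) = Set.univ

/-- The ia-width of a poset: the minimum cardinality of an ia-partition. -/
noncomputable def iaWidth (γ : Type*) [Preorder γ] : ℕ :=
  sInf {n : ℕ | ∃ 𝒜 : Finset (Set γ), IsIAPartition 𝒜 ∧ 𝒜.card = n}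

section Aux

variable {γ : Type*} [Preorder γ]

/-- Two elements are indistinguishably incomparable. -/
def IndisRel (x y : γ) : Prop :=
  ¬ x < y ∧ ¬ y < x ∧ ∀ z, z ≠ x → z ≠ y → ((x < z ↔ y < z) ∧ (z < x ↔ z < y))

lemma indisRel_refl (x : γ) : IndisRel x x :=
  ⟨lt_irrefl x, lt_irrefl x, fun _ _ _ => ⟨Iff.rfl, Iff.rfl⟩⟩

lemma indisRel_symm {x y : γ} (h : IndisRel x y) : IndisRel y x :=
  ⟨h.2.1, h.1, fun z hz1 hz2 => ⟨(h.2.2 z hz2 hz1).1.symm, (h.2.2 z hz2 hz1).2.symm⟩⟩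

lemma indisRel_of_mem {A : Set γ} (hA : IsIndisAntichain A) {x y : γ}
    (hx : x ∈ A) (hy : y ∈ A) : IndisRel x y := by
  by_cases hxy : x = y
  · subst hxy; exact indisRel_refl x
  refine ⟨hA.1 hx hy hxy, hA.1 hy hx (Ne.symm hxy), fun z hz1 hz2 => ?_⟩
  by_cases hzA : z ∈ A
  · exact ⟨iff_of_false (hA.1 hx hzA (Ne.symm hz1)) (hA.1 hy hzA (Ne.symm hz2)),
      iff_of_false (hA.1 hzA hx hz1) (hA.1 hzA hy hz2)⟩
  · exact hA.2 x hx y hy z hzA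

lemma indisRel_trans {x y z : γ} (hxy : IndisRel x y) (hyz : IndisRel y z) :
    IndisRel x z := by
  by_cases h1 : x = y
  · subst h1; exact hyz
  by_cases h2 : y = z
  · subst h2; exact hxy
  by_cases h3 : x = z
  · subst h3; exact indisRel_refl x
  have hxz : ¬ x < z := fun h => hyz.1 (((hxy.2.2 z (Ne.symm h3) (Ne.symm h2)).1).mp h)
  have hzx : ¬ z < x := fun h => hyz.2.1 (((hxy.2.2 z (Ne.symm h3) (Ne.symm h2)).2).mp h)
  refine ⟨hxz, hzx, fun w hw1 hw2 => ?_⟩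
  by_cases hw3 : w = y
  · subst hw3
    exact ⟨iff_of_false hxy.1 hyz.2.1, iff_of_false hxy.2.1 hyz.1⟩
  · exact ⟨(hxy.2.2 w hw1 hw3).1.trans (hyz.2.2 w hw3 hw2).1,
      (hxy.2.2 w hw1 hw3).2.trans (hyz.2.2 w hw3 hw2).2⟩

lemma indis_of_pairwise {S : Set γ} (h : ∀ x ∈ S, ∀ y ∈ S, IndisRel x y) :
    IsIndisAntichain S := by
  constructor
  · intro x hx y hy _
    exact (h x hx y hy).1
  · intro x hx y hy z hz
    have hzx : z ≠ x := fun e => hz (e ▸ hx)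
    have hzy : z ≠ y := fun e => hz (e ▸ hy)
    exact (h x hx y hy).2.2 z hzx hzy

end Aux

/-- if `𝒜` is an ia-partition of a finite poset such that no
union of two distinct classes of `𝒜` is an indistinguishable antichain, then
`𝒜` has minimum cardinality among all ia-partitions, i.e., its cardinality is
the ia-width. -/
theorem stmt10 {γ : Type*} [Fintype γ] [PartialOrder γ]
    (𝒜 : Finset (Set γ)) (h𝒜 : IsIAPartition 𝒜)
    (hmax : ∀ A₁ ∈ 𝒜, ∀ A₂ ∈ 𝒜, A₁ ≠ A₂ → ¬ IsIndisAntichain (A₁ ∪ A₂)) :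
    (∀ ℬ : Finset (Set γ), IsIAPartition ℬ → 𝒜.card ≤ ℬ.card) ∧
    𝒜.card = iaWidth γ := by
  have main : ∀ ℬ : Finset (Set γ), IsIAPartition ℬ → 𝒜.card ≤ ℬ.card := by
    intro ℬ hℬ
    have hex : ∀ A : Set γ, ∃ B : Set γ, A ∈ 𝒜 → B ∈ ℬ ∧ (A ∩ B).Nonempty := by
      intro A
      by_cases hA : A ∈ 𝒜
      · obtain ⟨a, ha⟩ := (h𝒜.1 A hA).1
        have : a ∈ ⋃ B ∈ ℬ, B := by rw [hℬ.2.2]; trivial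
        obtain ⟨B, hB, haB⟩ := by simpa using this
        exact ⟨B, fun _ => ⟨hB, a, ha, haB⟩⟩
      · exact ⟨∅, fun h => absurd h hA⟩
    choose g hg using hex
    apply Finset.card_le_card_of_injOn g (fun A hA => (hg A hA).1)
    intro A₁ hA₁ A₂ hA₂ hgeq
    by_contra hne
    obtain ⟨a₁, ha₁A, ha₁B⟩ := (hg A₁ hA₁).2
    obtain ⟨a₂, ha₂A, ha₂B⟩ := (hg A₂ hA₂).2
    rw [hgeq] at ha₁B
    have hB := (hℬ.1 (g A₂) (hg A₂ hA₂).1).2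
    have hrel : IndisRel a₁ a₂ := indisRel_of_mem hB ha₁B ha₂B
    have h1 := (h𝒜.1 A₁ hA₁).2
    have h2 := (h𝒜.1 A₂ hA₂).2
    apply hmax A₁ hA₁ A₂ hA₂ hne
    apply indis_of_pairwise
    intro x hx y hy
    have key : ∀ w ∈ A₁ ∪ A₂, IndisRel w a₂ := by
      intro w hw
      rcases hw with hw | hw
      · exact indisRel_trans (indisRel_of_mem h1 hw ha₁A) hrel
      · exact indisRel_of_mem h2 hw ha₂A
    exact indisRel_trans (key x hx) (indisRel_symm (key y hy))
  refine ⟨main, ?_⟩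
  apply le_antisymm
  · exact le_csInf ⟨𝒜.card, 𝒜, h𝒜, rfl⟩ (fun n ⟨ℬ, hℬ, hn⟩ => hn ▸ main ℬ hℬ)
  · exact Nat.sInf_le ⟨𝒜, h𝒜, rfl⟩
end

section
/- Let (P, T) be a labeled finite poset whose value-equality quotient digraph G is acyclic, and let <' be the strict partial order on the labels in the image of T given by the transitive closure of the edge relation of G. Then a sequence v_1, …, v_m enumerating exactly once each distinct label in the image of T arises as the sequence of labels read along some contiguous linear extension of (P, T) (collapsing each maximal block of equal consecutive labels to a single occurrence) if and only if v_i <' v_j implies i < j, i.e., iff the sequence is a linear extension of <'. -/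
/-- A linear extension of the labeled finite poset `(α, T)` is contiguous if,
for every label, the positions carrying that label form an interval. -/
def IsContiguous {α L : Type*} [Fintype α] [PartialOrder α]
    (T : α → L) (e : Fin (Fintype.card α) ≃ α) : Prop :=
  ∀ i j k : Fin (Fintype.card α), i ≤ j → j ≤ k →
    T (e i) = T (e k) → T (e j) = T (e i)

/-- The edge relation of the value-equality quotient digraph of `(α, T)`: there
is an edge from label `v` to label `w` iff `v ≠ w` and some element labeled `v`
is strictly below some element labeled `w`. -/
def quotEdge {α L : Type*} [PartialOrder α] (T : α → L) (v w : L) : Prop :=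
  v ≠ w ∧ ∃ x y : α, T x = v ∧ T y = w ∧ x < y

/-- assume the value-equality quotient digraph of `(α, T)` is
acyclic, and let `<'` be the strict partial order on labels given by the
transitive closure of its edge relation. A sequence `s 0, …, s (m-1)`
enumerating exactly once each label in the image of `T` arises as the sequence
of labels read along some contiguous linear extension of `(α, T)` (collapsing
each maximal block of equal consecutive labels to a single occurrence) iff it
is a linear extension of `<'`, i.e., `s p <' s q` implies `p < q`.
(The collapsed label sequence of a contiguous linear extension `e` equals `s`
iff labels appear along `e` in blocks ordered according to `s`, which is
expressed by the monotonicity condition in the left-hand side.) -/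
theorem stmt14 {α L : Type*} [Fintype α] [PartialOrder α] (T : α → L)
    (hacyc : ∀ v : L, ¬ Relation.TransGen (quotEdge T) v v)
    (m : ℕ) (s : Fin m → L) (hs : Function.Injective s)
    (hrange : Set.range s = Set.range T) :
    (∃ e : Fin (Fintype.card α) ≃ α, IsLinearExtension e ∧ IsContiguous T e ∧
        ∀ i j : Fin (Fintype.card α), i ≤ j → ∀ p q : Fin m,
          T (e i) = s p → T (e j) = s q → p ≤ q)
    ↔ (∀ p q : Fin m, Relation.TransGen (quotEdge T) (s p) (s q) → p < q) := by
  classical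
  have hmem : ∀ x : α, T x ∈ Set.range s := by
    intro x; rw [hrange]; exact Set.mem_range_self x
  choose f hf using hmem
  constructor
  · rintro ⟨e, hle, hcont, hmono⟩
    -- single edge lemma
    have hsingle : ∀ p q : Fin m, quotEdge T (s p) (s q) → p < q := by
      rintro p q ⟨hne, x, y, hx, hy, hxy⟩
      have hi : e (e.symm x) = x := e.apply_symm_apply x
      have hj : e (e.symm y) = y := e.apply_symm_apply y
      have hlt : e.symm x < e.symm y := hle _ _ (by rw [hi, hj]; exact hxy)
      have hpq : p ≤ q := hmono _ _ hlt.le p q (by rw [hi, hx]) (by rw [hj, hy])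
      exact lt_of_le_of_ne hpq (fun h => hne (by rw [h]))
    have main : ∀ v w : L, Relation.TransGen (quotEdge T) v w →
        ∀ p q : Fin m, s p = v → s q = w → p < q := by
      intro v w h
      induction h with
      | single hvw => intro p q hp hq; exact hsingle p q (by rw [hp, hq]; exact hvw)
      | @tail b c _ hbc ih =>
        intro p q hp hq
        obtain ⟨_, x, y, hx, _, _⟩ := id hbc
        obtain ⟨r, hr⟩ : b ∈ Set.range s := by rw [hrange]; exact ⟨x, hx⟩
        exact lt_trans (ih p r hp hr) (hsingle r q (by rw [hr, hq]; exact hbc))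
    intro p q h
    exact main _ _ h p q rfl rfl
  · intro hcomp
    set key : α → Lex (Fin m × LinearExtension α) :=
      fun x => toLex (f x, toLinearExtension x) with hkey
    have hkeyinj : Function.Injective key := by
      intro a b hab
      have h2 := congrArg (fun z => (ofLex z).2) hab
      exact h2
    have hkey_fst : ∀ x : α, (ofLex (key x)).1 = f x := fun x => rfl
    have hkey_lt : ∀ x y : α, x < y → key x < key y := by
      intro x y hxy
      rcases eq_or_ne (T x) (T y) with hT | hT
      · have hfxy : f x = f y := hs (by rw [hf, hf, hT])
        refine Prod.Lex.lt_iff.2 (Or.inr ⟨hfxy, ?_⟩)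
        exact lt_of_le_of_ne (toLinearExtension.monotone hxy.le)
          (fun h => hxy.ne (by exact h))
      · have hedge : quotEdge T (T x) (T y) := ⟨hT, x, y, rfl, rfl, hxy⟩
        have : Relation.TransGen (quotEdge T) (s (f x)) (s (f y)) := by
          rw [hf, hf]; exact Relation.TransGen.single hedge
        exact Prod.Lex.lt_iff.2 (Or.inl (hcomp _ _ this))
    set F : Finset (Lex (Fin m × LinearExtension α)) :=
      Finset.univ.map ⟨key, hkeyinj⟩ with hF
    have hcard : F.card = Fintype.card α := by simp [hF]
    set e0 := F.orderIsoOfFin hcard with he0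
    have hbij : Function.Bijective (fun a : α => (⟨key a, by
        simp [hF, Finset.mem_map]⟩ : {x // x ∈ F})) := by
      rw [Fintype.bijective_iff_injective_and_card]
      constructor
      · intro a b hab; exact hkeyinj (congrArg Subtype.val hab)
      · simp [hcard]
    set g := Equiv.ofBijective _ hbij with hg
    set e := e0.toEquiv.trans g.symm with he
    have hk : ∀ i, key (e i) = ((e0 i : {x // x ∈ F}) : Lex (Fin m × LinearExtension α)) := by
      intro i
      exact congrArg Subtype.val (g.apply_symm_apply (e0 i))
    -- i ≤ j gives key comparison
    have hkle : ∀ i j : Fin (Fintype.card α), i ≤ j → key (e i) ≤ key (e j) := by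
      intro i j hij
      rw [hk, hk]
      exact Subtype.coe_le_coe.2 (e0.monotone hij)
    have hfle : ∀ i j : Fin (Fintype.card α), i ≤ j → f (e i) ≤ f (e j) := by
      intro i j hij
      have := hkle i j hij
      rcases Prod.Lex.le_iff.1 this with h | h
      · exact le_of_lt h
      · exact le_of_eq h.1
    have hfT : ∀ x : α, T x = s (f x) := fun x => (hf x).symm
    refine ⟨e, ?_, ?_, ?_⟩
    · intro i j hij
      have hkij : key (e i) < key (e j) := hkey_lt _ _ hij
      rw [hk, hk] at hkij
      exact e0.lt_iff_lt.1 (Subtype.coe_lt_coe.1 hkij)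
    · intro i j k hij hjk hTik
      have h1 : f (e i) ≤ f (e j) := hfle i j hij
      have h2 : f (e j) ≤ f (e k) := hfle j k hjk
      have h3 : f (e i) = f (e k) := hs (by rw [hf, hf, hTik])
      have : f (e j) = f (e i) := le_antisymm (h3 ▸ h2) h1
      rw [hfT (e j), hfT (e i), this]
    · intro i j hij p q hp hq
      have hp' : f (e i) = p := hs (by rw [hf, hp])
      have hq' : f (e j) = q := hs (by rw [hf, hq])
      rw [← hp', ← hq']
      exact hfle i j hij
end

section
/- Let (P, T) be a labeled finite poset whose value-equality quotient digraph G is acyclic, and let <' be the strict partial order on the labels in the image of T given by the transitive closure of the edge relation of G. Then the width of the poset (image of T, <') is at most the width of P. -/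
/-- The width of a type under a relation: the supremum of the cardinalities of
its antichains. -/
noncomputable def relWidth {γ : Type*} (r : γ → γ → Prop) : ℕ :=
  sSup {n : ℕ | ∃ A : Set γ, IsAntichain r A ∧ A.ncard = n}

/-- if the value-equality quotient digraph of the labeled finite
poset `(α, T)` is acyclic, then the width of the poset of labels in the image
of `T`, ordered by the transitive closure `<'` of the edge relation, is at most
the width of `α`. -/
theorem stmt15 {α L : Type*} [Fintype α] [PartialOrder α] (T : α → L)
    (hacyc : ∀ v : L, ¬ Relation.TransGen (quotEdge T) v v) :
    relWidth (fun v w : Set.range T => Relation.TransGen (quotEdge T) v.val w.val)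
      ≤ relWidth ((· < ·) : α → α → Prop) := by
  classical
  -- a representative for each label in the range
  let rep : Set.range T → α := fun v => v.2.choose
  have hrep : ∀ v : Set.range T, T (rep v) = v.val := fun v => v.2.choose_spec
  have hinj : Function.Injective rep := by
    intro v w h
    apply Subtype.ext
    rw [← hrep v, ← hrep w, h]
  have hbdd : BddAbove {n : ℕ | ∃ A : Set α,
      IsAntichain ((· < ·) : α → α → Prop) A ∧ A.ncard = n} := by
    refine ⟨Fintype.card α, ?_⟩
    rintro n ⟨A, -, rfl⟩
    calc A.ncard ≤ (Set.univ : Set α).ncard :=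
          Set.ncard_le_ncard (Set.subset_univ A) Set.finite_univ
      _ = Fintype.card α := by rw [Set.ncard_univ, Nat.card_eq_fintype_card]
  have hne : {n : ℕ | ∃ A : Set (Set.range T),
      IsAntichain (fun v w : Set.range T =>
        Relation.TransGen (quotEdge T) v.val w.val) A ∧ A.ncard = n}.Nonempty := by
    exact ⟨0, ∅, by simp [IsAntichain], Set.ncard_empty _⟩
  apply csSup_le hne
  rintro n ⟨A, hA, rfl⟩
  apply le_csSup hbdd
  refine ⟨rep '' A, ?_, ?_⟩
  · rintro a ⟨v, hv, rfl⟩ b ⟨w, hw, rfl⟩ hab hlt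
    have hvw : v ≠ w := fun h => hab (by rw [h])
    have hvalne : v.val ≠ w.val := fun h => hvw (Subtype.ext h)
    exact hA hv hw hvw (Relation.TransGen.single ⟨hvalne, rep v, rep w, hrep v, hrep w, hlt⟩)
  · exact Set.ncard_image_of_injective A hinj
end

section
/- Let (P, T) be a labeled finite poset and let t_1 ≠ t_2 be two labels that both occur in the image of T. Then there exists a linear extension of P in which the smallest position of an element labeled t_1 is strictly smaller than every position of an element labeled t_2 (i.e., the first occurrence of t_1 precedes all occurrences of t_2) if and only if there exists an element x with T(x) = t_1 such that the transitive closure of the relation obtained from the order of P by adding the pairs (x, y) for all elements y with T(y) = t_2 is irreflexive. -/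
open Relation in
lemma exists_enum {α : Type*} [Fintype α] (r : α → α → Prop)
    (hirr : ∀ z : α, ¬ TransGen r z z) :
    ∃ e : Fin (Fintype.card α) ≃ α,
      ∀ a b : α, TransGen r a b → e.symm a < e.symm b := by
  letI P : PartialOrder α :=
    { le := fun a b => a = b ∨ TransGen r a b
      lt := TransGen r
      le_refl := fun a => Or.inl rfl
      le_trans := by
        rintro a b c (h | h) (h' | h')
        · exact Or.inl (h.trans h')
        · subst h; exact Or.inr h'
        · subst h'; exact Or.inr h
        · exact Or.inr (Relation.TransGen.trans h h')
      le_antisymm := by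
        rintro a b (h | h) (h' | h')
        · exact h
        · exact h
        · exact h'.symm
        · exact absurd (Relation.TransGen.trans h h') (hirr a)
      lt_iff_le_not_ge := by
        intro a b
        constructor
        · intro h
          refine ⟨Or.inr h, ?_⟩
          rintro (h' | h')
          · subst h'; exact hirr _ h
          · exact hirr a (Relation.TransGen.trans h h')
        · rintro ⟨h | h, h2⟩
          · subst h; exact absurd (Or.inl rfl) h2
          · exact h }
  haveI F : Fintype (LinearExtension α) := ‹Fintype α›
  have hcard : Fintype.card (LinearExtension α) = Fintype.card α := Fintype.card_congr (by exact Equiv.refl α)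
  let iso := monoEquivOfFin (LinearExtension α) hcard
  refine ⟨iso.toEquiv, fun a b h => ?_⟩
  have hle : toLinearExtension (α := α) a ≤ toLinearExtension b := toLinearExtension.monotone (Or.inr h)
  have hne : toLinearExtension (α := α) a ≠ toLinearExtension b := by
    intro heq
    have : a = b := heq
    subst this
    exact hirr a h
  have hlt : toLinearExtension (α := α) a < toLinearExtension b := lt_of_le_of_ne hle hne
  have := iso.symm.strictMono hlt
  exact this



/-- for distinct labels `t₁ ≠ t₂` both occurring in the image of
`T`, there exists a linear extension in which the first occurrence of `t₁`
precedes all occurrences of `t₂` iff there is an element `x` labeled `t₁` such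
that the transitive closure of the relation obtained from the order of `α` by
adding the pairs `(x, y)` for all `y` labeled `t₂` is irreflexive. -/
theorem stmt17 {α L : Type*} [Fintype α] [PartialOrder α]
    (T : α → L) (t₁ t₂ : L) (hne : t₁ ≠ t₂)
    (h₁ : t₁ ∈ Set.range T) (h₂ : t₂ ∈ Set.range T) :
    (∃ e : Fin (Fintype.card α) ≃ α, IsLinearExtension e ∧
        ∃ i : Fin (Fintype.card α), T (e i) = t₁ ∧
          ∀ j : Fin (Fintype.card α), T (e j) = t₂ → i < j)
    ↔ (∃ x : α, T x = t₁ ∧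
        ∀ z : α, ¬ Relation.TransGen
          (fun a b : α => a < b ∨ (a = x ∧ T b = t₂)) z z) := by
  constructor
  · rintro ⟨e, he, i, hi, hall⟩
    refine ⟨e i, hi, fun z hz => ?_⟩
    have key : ∀ a b : α, Relation.TransGen
        (fun a b : α => a < b ∨ (a = e i ∧ T b = t₂)) a b → e.symm a < e.symm b := by
      intro a b hab
      induction hab with
      | single h =>
        rcases h with h | ⟨rfl, h⟩
        · exact he _ _ (by simpa using h)
        · have := hall (e.symm _) (by simpa using h)
          simpa using this
      | tail _ h ih =>
        refine lt_trans ih ?_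
        rcases h with h | ⟨rfl, h⟩
        · exact he _ _ (by simpa using h)
        · have := hall (e.symm _) (by simpa using h)
          simpa using this
    exact absurd (key z z hz) (lt_irrefl _)
  · rintro ⟨x, hx, hirr⟩
    obtain ⟨e, he⟩ := exists_enum (fun a b : α => a < b ∨ (a = x ∧ T b = t₂)) hirr
    have hstep : ∀ a b : α, (a < b ∨ (a = x ∧ T b = t₂)) → e.symm a < e.symm b :=
      fun a b h => he a b (Relation.TransGen.single h)
    refine ⟨e, fun i j hij => ?_, e.symm x, by simpa using hx, fun j hj => ?_⟩
    · have := hstep (e i) (e j) (Or.inl hij)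
      simpa using this
    · have := hstep x (e j) (Or.inr ⟨rfl, hj⟩)
      simpa using this
end
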